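/- arXiv:2205.11114 — 6 statements merged into one kernel-verified Lean document; each statement's English description precedes it below -/
import Mathlib

section
/- Let ℓ be a prime number and A a commutative ring in which ℓ is invertible. Every nonzero Laurent polynomial P ∈ A[z^{±1}] has a unique expression P = r₀ + r₁(z − 1) + r₂(z^ℓ − 1) + ⋯ + r_n(z^{ℓ^{n−1}} − 1), where each r_i belongs to the A-submodule A(−⌊φ(ℓⁱ)/2⌋ ; φ(ℓⁱ) − ⌊φ(ℓⁱ)/2⌋ − 1) and r_n ≠ 0. (Here uniqueness means: the integer n ≥ 0 and the coefficients r₀, …, r_n are uniquely determined by P.) -/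
open LaurentPolynomial
open scoped Pointwise

/-- The `A`-submodule `A(i;j)` of the Laurent polynomial ring `A[z^{±1}]` consisting of
Laurent polynomials `∑_{i ≤ s ≤ j} a_s z^s`, realized as the span of the monomials `T s`
for `i ≤ s ≤ j`.  Here we take `i = -⌊φ(ℓ^n)/2⌋` and `j = φ(ℓ^n) - ⌊φ(ℓ^n)/2⌋ - 1`. -/
noncomputable def cyclotomicBox (A : Type*) [CommRing A] (ℓ n : ℕ) :
    Submodule A (LaurentPolynomial A) :=
  Submodule.span A ((fun s : ℤ => (T s : LaurentPolynomial A)) ''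
    Set.Icc (-(((ℓ ^ n).totient / 2 : ℕ) : ℤ))
      (((ℓ ^ n).totient : ℤ) - (((ℓ ^ n).totient / 2 : ℕ) : ℤ) - 1))

/-- The factors of the cyclotomic expansion: `1` for `i = 0` and `z^{ℓ^{i-1}} - 1` for `i ≥ 1`. -/
noncomputable def cyclotomicFactor (A : Type*) [CommRing A] (ℓ : ℕ) :
    ℕ → LaurentPolynomial A
  | 0 => 1
  | (n + 1) => T ((ℓ ^ n : ℕ) : ℤ) - 1

namespace CycExpAux

/-- lower endpoint of the box interval -/
def Lo (ℓ n : ℕ) : ℤ := -(((ℓ ^ n).totient / 2 : ℕ) : ℤ)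

/-- upper endpoint of the box interval -/
def Bo (ℓ n : ℕ) : ℤ :=
  ((ℓ ^ n).totient : ℤ) - (((ℓ ^ n).totient / 2 : ℕ) : ℤ) - 1

/-- upper endpoint of the "reachable" interval `J_n` -/
def Hi (ℓ : ℕ) : ℕ → ℤ
  | 0 => 0
  | (n + 1) => Bo ℓ (n + 1) + ((ℓ ^ n : ℕ) : ℤ)

variable {A : Type*} [CommRing A] {ℓ : ℕ}

lemma box_eq (n : ℕ) :
    cyclotomicBox A ℓ n = AddMonoidAlgebra.supported A A (Set.Icc (Lo ℓ n) (Bo ℓ n)) := by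
  have h : (fun s : ℤ => (T s : LaurentPolynomial A))
      = fun s : ℤ => AddMonoidAlgebra.single s (1 : A) := rfl
  rw [cyclotomicBox, h, ← AddMonoidAlgebra.supported_eq_span_single, Lo, Bo]

lemma mem_box_iff {n : ℕ} {x : LaurentPolynomial A} :
    x ∈ cyclotomicBox A ℓ n ↔ ↑x.coeff.support ⊆ Set.Icc (Lo ℓ n) (Bo ℓ n) := by
  rw [box_eq, AddMonoidAlgebra.mem_supported]

lemma T_mem_box {n : ℕ} {s : ℤ} (h : s ∈ Set.Icc (Lo ℓ n) (Bo ℓ n)) :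
    (T s : LaurentPolynomial A) ∈ cyclotomicBox A ℓ n :=
  Submodule.subset_span ⟨s, h, rfl⟩

lemma T_mem_supported {s : Set ℤ} {a : ℤ} (h : a ∈ s) :
    (T a : LaurentPolynomial A) ∈ AddMonoidAlgebra.supported A A s := by
  rw [AddMonoidAlgebra.mem_supported]
  intro b hb
  have hb' : b ∈ ({a} : Finset ℤ) := Finsupp.support_single_subset (Finset.mem_coe.1 hb)
  rw [Finset.mem_singleton] at hb'
  subst hb'
  exact h

section Arith

variable (hℓ : Nat.Prime ℓ)
include hℓ

lemma tot_succ (n : ℕ) : (ℓ ^ (n + 1)).totient + ℓ ^ n = ℓ ^ (n + 1) := by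
  rw [Nat.totient_prime_pow hℓ n.succ_pos]
  have h1 : 1 ≤ ℓ := hℓ.one_lt.le
  calc ℓ ^ n * (ℓ - 1) + ℓ ^ n = ℓ ^ n * ((ℓ - 1) + 1) := by ring
    _ = ℓ ^ n * ℓ := by rw [Nat.sub_add_cancel h1]
    _ = ℓ ^ (n + 1) := by ring

lemma tot_pos (n : ℕ) : 0 < (ℓ ^ n).totient :=
  Nat.totient_pos.2 (pow_pos hℓ.pos n)

lemma tot_mono (n : ℕ) : (ℓ ^ n).totient ≤ (ℓ ^ (n + 1)).totient := by
  cases n with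
  | zero =>
    simp only [pow_zero, Nat.totient_one]
    exact tot_pos hℓ 1
  | succ n =>
    rw [Nat.totient_prime_pow hℓ n.succ_pos, Nat.totient_prime_pow hℓ (n + 1).succ_pos]
    exact Nat.mul_le_mul_right _ (Nat.pow_le_pow_right hℓ.pos (by omega))

omit hℓ in
lemma Lo_zero : Lo ℓ 0 = 0 := by simp [Lo]

omit hℓ in
lemma Bo_zero : Bo ℓ 0 = 0 := by simp [Bo]

omit hℓ in
lemma Hi_zero : Hi ℓ 0 = 0 := rfl

lemma Hi_sub_Lo (n : ℕ) : Hi ℓ n = Lo ℓ n + ((ℓ ^ n : ℕ) : ℤ) - 1 := by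
  cases n with
  | zero => simp [Hi_zero, Lo_zero]
  | succ n =>
    have ht := tot_succ hℓ n
    set t := (ℓ ^ (n + 1)).totient with htdef
    have h1 : 2 * (t / 2) ≤ t := by omega
    have h2 : t ≤ 2 * (t / 2) + 1 := by omega
    have ht' : (t : ℤ) + ((ℓ ^ n : ℕ) : ℤ) = ((ℓ ^ (n + 1) : ℕ) : ℤ) := by
      exact_mod_cast congrArg (Nat.cast : ℕ → ℤ) ht
    simp only [Hi, Bo, Lo, ← htdef]
    omega

lemma Lo_succ_le (n : ℕ) : Lo ℓ (n + 1) ≤ Lo ℓ n := by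
  simp only [Lo, neg_le_neg_iff, Nat.cast_le]
  exact Nat.div_le_div_right (tot_mono hℓ n)

lemma Bo_nonneg (n : ℕ) : 0 ≤ Bo ℓ n := by
  have h := tot_pos hℓ n
  set t := (ℓ ^ n).totient
  simp only [Bo]
  omega

omit hℓ in
lemma Lo_nonpos (n : ℕ) : Lo ℓ n ≤ 0 := by
  simp only [Lo]
  omega

lemma Bo_mono (n : ℕ) : Bo ℓ n ≤ Bo ℓ (n + 1) := by
  have h := tot_mono hℓ n
  set a := (ℓ ^ n).totient
  set b := (ℓ ^ (n + 1)).totient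
  simp only [Bo]
  omega

lemma Hi_le_succ (n : ℕ) : Hi ℓ n ≤ Hi ℓ (n + 1) := by
  cases n with
  | zero =>
    have h1 : (0:ℤ) ≤ Bo ℓ 1 := Bo_nonneg hℓ 1
    have h2 : (1:ℤ) ≤ ((ℓ ^ 0 : ℕ) : ℤ) := by norm_num
    show (0:ℤ) ≤ Bo ℓ 1 + ((ℓ ^ 0 : ℕ) : ℤ)
    omega
  | succ n =>
    have h1 := Bo_mono hℓ (n + 1)
    have h2 : ((ℓ ^ n : ℕ) : ℤ) ≤ ((ℓ ^ (n + 1) : ℕ) : ℤ) := by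
      exact_mod_cast Nat.pow_le_pow_right hℓ.pos (by omega)
    simp only [Hi]
    omega

lemma Lo_le_of_le {i n : ℕ} (h : i ≤ n) : Lo ℓ n ≤ Lo ℓ i := by
  induction n with
  | zero =>
    have : i = 0 := by omega
    subst this; exact le_rfl
  | succ n ih =>
    rcases Nat.lt_or_ge i (n + 1) with h' | h'
    · exact le_trans (Lo_succ_le hℓ n) (ih (by omega))
    · have : i = n + 1 := by omega
      subst this; exact le_rfl

lemma Hi_le_of_le {i n : ℕ} (h : i ≤ n) : Hi ℓ i ≤ Hi ℓ n := by
  induction n with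
  | zero =>
    have : i = 0 := by omega
    subst this; exact le_rfl
  | succ n ih =>
    rcases Nat.lt_or_ge i (n + 1) with h' | h'
    · exact le_trans (ih (by omega)) (Hi_le_succ hℓ n)
    · have : i = n + 1 := by omega
      subst this; exact le_rfl

omit hℓ in
lemma two_mul_le_two_pow : ∀ k : ℕ, 2 * k ≤ 2 ^ k := by
  intro k
  induction k with
  | zero => simp
  | succ k ih =>
    cases k with
    | zero => simp
    | succ k =>
      have h2 : 2 ≤ 2 ^ (k + 1) := Nat.one_lt_two_pow_iff.2 (by omega)
      rw [pow_succ]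
      omega

lemma Lo_le (n : ℕ) : Lo ℓ n ≤ -(n : ℤ) + 1 := by
  cases n with
  | zero => simp [Lo_zero]
  | succ n =>
    have h1 : 2 ^ (n + 1) ≤ (ℓ ^ (n + 1)).totient + ℓ ^ n := by
      rw [tot_succ hℓ n]
      exact Nat.pow_le_pow_left hℓ.two_le (n + 1)
    have h2 : ℓ ^ n ≤ (ℓ ^ (n + 1)).totient := by
      rw [Nat.totient_prime_pow hℓ n.succ_pos]
      have := hℓ.two_le
      calc ℓ ^ n = ℓ ^ n * 1 := by ring
        _ ≤ ℓ ^ n * (ℓ - 1) := Nat.mul_le_mul_left _ (by omega)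
    have h3 : 2 ^ n ≤ (ℓ ^ (n + 1)).totient := by
      have : 2 ^ n ≤ ℓ ^ n := Nat.pow_le_pow_left hℓ.two_le n
      omega
    have h4 : 2 * n ≤ 2 ^ n := two_mul_le_two_pow n
    have h5 : n ≤ (ℓ ^ (n + 1)).totient / 2 := by omega
    simp only [Lo]
    have : (n : ℤ) ≤ (((ℓ ^ (n + 1)).totient / 2 : ℕ) : ℤ) := by exact_mod_cast h5
    omega

lemma le_Hi (n : ℕ) : (n : ℤ) - 1 ≤ Hi ℓ n := by
  cases n with
  | zero => simp [Hi_zero]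
  | succ n =>
    have h1 : (0:ℤ) ≤ Bo ℓ (n + 1) := Bo_nonneg hℓ (n + 1)
    have h2 : n + 1 ≤ ℓ ^ n := by
      have ha : 2 ^ n ≤ ℓ ^ n := Nat.pow_le_pow_left hℓ.two_le n
      have hb : 2 * n ≤ 2 ^ n := two_mul_le_two_pow n
      cases n with
      | zero => simpa using hℓ.pos
      | succ k => omega
    have h2' : ((n : ℤ) + 1) ≤ ((ℓ ^ n : ℕ) : ℤ) := by exact_mod_cast h2
    simp only [Hi]
    have h3 : ((n : ℕ) + 1 : ℤ) - 1 = (n : ℤ) := by push_cast; ring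
    omega

end Arith

/-- telescoping identity -/
lemma telescope (m a : ℤ) (t : ℕ) :
    (∑ u ∈ Finset.range t, (T (a + m * u) : LaurentPolynomial A)) * (T m - 1)
      = T (a + m * t) - T a := by
  induction t with
  | zero => simp
  | succ t ih =>
    rw [Finset.sum_range_succ, add_mul, ih, mul_sub, mul_one, ← T_add]
    have h : a + m * (t : ℤ) + m = a + m * ((t : ℕ) + 1 : ℕ) := by push_cast; ring
    rw [h]
    ring

/-- the key division step: every monomial in `J_{n+1}` is a monomial in `J_n` plus an
element of `box_{n+1} * (T (ℓ^n) - 1)`. -/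
lemma step (hℓ : Nat.Prime ℓ) (n : ℕ) (k : ℤ)
    (hk : k ∈ Set.Icc (Lo ℓ (n + 1)) (Hi ℓ (n + 1))) :
    ∃ j ∈ Set.Icc (Lo ℓ n) (Hi ℓ n), ∃ g ∈ cyclotomicBox A ℓ (n + 1),
      (T k : LaurentPolynomial A) = T j + g * (T ((ℓ ^ n : ℕ) : ℤ) - 1) := by
  set m : ℤ := ((ℓ ^ n : ℕ) : ℤ) with hm
  have hmpos : 0 < m := by
    rw [hm]
    exact_mod_cast pow_pos hℓ.pos n
  set j : ℤ := Lo ℓ n + (k - Lo ℓ n) % m with hj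
  have hjmem : j ∈ Set.Icc (Lo ℓ n) (Hi ℓ n) := by
    constructor
    · have := Int.emod_nonneg (k - Lo ℓ n) hmpos.ne'
      omega
    · have := Int.emod_lt_of_pos (k - Lo ℓ n) hmpos
      have hHi := Hi_sub_Lo hℓ n
      omega
  have hdvd : k - j = m * ((k - Lo ℓ n) / m) := by
    have := Int.emod_add_mul_ediv (k - Lo ℓ n) m
    omega
  set t : ℤ := (k - Lo ℓ n) / m with ht
  rcases le_or_gt 0 t with htpos | htneg
  · -- going up from j to k
    refine ⟨j, hjmem, ∑ u ∈ Finset.range t.toNat, (T (j + m * u) : LaurentPolynomial A),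
      ?_, ?_⟩
    · refine Submodule.sum_mem _ fun u hu => T_mem_box ?_
      have hu' : (u : ℤ) ≤ t - 1 := by
        have := Finset.mem_range.1 hu
        omega
      constructor
      · have h1 : Lo ℓ (n + 1) ≤ Lo ℓ n := Lo_succ_le hℓ n
        have h2 : (0:ℤ) ≤ m * u := by positivity
        have := hjmem.1
        omega
      · -- j + m*u ≤ k - m = Hi (n+1) - m + (k - Hi(n+1)) ≤ Bo (n+1)
        have h1 : m * (u : ℤ) ≤ m * (t - 1) := by
          apply mul_le_mul_of_nonneg_left hu' hmpos.le
        have h2 : j + m * t = k := by omega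
        have h3 : k ≤ Hi ℓ (n + 1) := hk.2
        have h4 : Hi ℓ (n + 1) = Bo ℓ (n + 1) + m := rfl
        have h5 : m * ((t : ℤ) - 1) = m * t - m := by ring
        omega
    · have := telescope (A := A) m j t.toNat
      have htt : (t.toNat : ℤ) = t := Int.toNat_of_nonneg htpos
      rw [htt] at this
      have h2 : j + m * t = k := by omega
      rw [h2] at this
      rw [this]
      ring
  · -- going down from j to k
    refine ⟨j, hjmem, -∑ u ∈ Finset.range (-t).toNat, (T (k + m * u) : LaurentPolynomial A),
      ?_, ?_⟩
    · refine Submodule.neg_mem _ (Submodule.sum_mem _ fun u hu => T_mem_box ?_)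
      have hu' : (u : ℤ) ≤ -t - 1 := by
        have := Finset.mem_range.1 hu
        omega
      constructor
      · have h2 : (0:ℤ) ≤ m * u := by positivity
        have := hk.1
        omega
      · have h1 : m * (u : ℤ) ≤ m * (-t - 1) := by
          apply mul_le_mul_of_nonneg_left hu' hmpos.le
        have h0 : m * (-t) = -(m * t) := by ring
        have h0' : m * (-t - 1) = -(m * t) - m := by ring
        have h2 : j = k + m * (-t) := by omega
        have h3 : j ≤ Hi ℓ n := hjmem.2
        have h4 : Hi ℓ n ≤ Hi ℓ (n + 1) := Hi_le_succ hℓ n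
        have h5 : Hi ℓ (n + 1) = Bo ℓ (n + 1) + m := rfl
        omega
    · have := telescope (A := A) m k (-t).toNat
      have htt : ((-t).toNat : ℤ) = -t := Int.toNat_of_nonneg (by omega)
      rw [htt] at this
      have h0 : m * (-t) = -(m * t) := by ring
      have h2 : k + m * (-t) = j := by omega
      rw [h2] at this
      rw [neg_mul, this]
      ring

lemma sum_smul_T (P : LaurentPolynomial A) :
    ∑ k ∈ P.coeff.support, P.coeff k • (T k : LaurentPolynomial A) = P := by
  conv_rhs => rw [← AddMonoidAlgebra.sum_coeff_single P]
  rw [Finsupp.sum]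
  refine Finset.sum_congr rfl fun k _ => ?_
  show P.coeff k • AddMonoidAlgebra.single k (1 : A) = _
  rw [AddMonoidAlgebra.smul_single, smul_eq_mul, mul_one]

/-- Existence of a representation (with possibly zero top coefficient). -/
lemma exists_rep (hℓ : Nat.Prime ℓ) :
    ∀ n : ℕ, ∀ P : LaurentPolynomial A,
      ↑P.coeff.support ⊆ Set.Icc (Lo ℓ n) (Hi ℓ n) →
      ∃ r : ℕ → LaurentPolynomial A, (∀ i ≤ n, r i ∈ cyclotomicBox A ℓ i) ∧
        P = ∑ i ∈ Finset.range (n + 1), r i * cyclotomicFactor A ℓ i := by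
  intro n
  induction n with
  | zero =>
    intro P hsupp
    refine ⟨fun _ => P, fun i hi => ?_, ?_⟩
    · interval_cases i
      rw [mem_box_iff, Bo_zero]
      rwa [Hi_zero] at hsupp
    · simp [cyclotomicFactor]
  | succ n ih =>
    intro P hsupp
    classical
    have hstep : ∀ k : ℤ, ∃ j : ℤ, ∃ g : LaurentPolynomial A,
        k ∈ Set.Icc (Lo ℓ (n + 1)) (Hi ℓ (n + 1)) →
          j ∈ Set.Icc (Lo ℓ n) (Hi ℓ n) ∧ g ∈ cyclotomicBox A ℓ (n + 1) ∧
            (T k : LaurentPolynomial A) = T j + g * (T ((ℓ ^ n : ℕ) : ℤ) - 1) := by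
      intro k
      by_cases hk : k ∈ Set.Icc (Lo ℓ (n + 1)) (Hi ℓ (n + 1))
      · obtain ⟨j, hj, g, hg, heq⟩ := step (A := A) hℓ n k hk
        exact ⟨j, g, fun _ => ⟨hj, hg, heq⟩⟩
      · exact ⟨0, 0, fun h => absurd h hk⟩
    choose j g hjg using hstep
    have hmem : ∀ k ∈ P.coeff.support, k ∈ Set.Icc (Lo ℓ (n + 1)) (Hi ℓ (n + 1)) :=
      fun k hk => hsupp hk
    set Q : LaurentPolynomial A := ∑ k ∈ P.coeff.support, P.coeff k • (T (j k) : LaurentPolynomial A)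
      with hQ
    set R : LaurentPolynomial A := ∑ k ∈ P.coeff.support, P.coeff k • g k with hR
    have hQsupp : ↑Q.coeff.support ⊆ Set.Icc (Lo ℓ n) (Hi ℓ n) := by
      show Q ∈ AddMonoidAlgebra.supported A A _
      refine Submodule.sum_mem _ fun k hk => Submodule.smul_mem _ _ ?_
      exact T_mem_supported ((hjg k (hmem k hk)).1)
    have hRmem : R ∈ cyclotomicBox A ℓ (n + 1) :=
      Submodule.sum_mem _ fun k hk => Submodule.smul_mem _ _ ((hjg k (hmem k hk)).2.1)
    have hPQR : P = Q + R * (T ((ℓ ^ n : ℕ) : ℤ) - 1) := by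
      rw [hQ, hR, Finset.sum_mul, ← Finset.sum_add_distrib]
      conv_lhs => rw [← sum_smul_T P]
      refine Finset.sum_congr rfl fun k hk => ?_
      rw [smul_mul_assoc, ← smul_add, (hjg k (hmem k hk)).2.2]
    obtain ⟨r', hr'mem, hr'eq⟩ := ih Q hQsupp
    refine ⟨fun i => if i = n + 1 then R else r' i, fun i hi => ?_, ?_⟩
    · by_cases h : i = n + 1
      · simpa [h] using hRmem
      · simpa [h] using hr'mem i (by omega)
    · rw [Finset.sum_range_succ]
      have h1 : ∑ i ∈ Finset.range (n + 1),
          (if i = n + 1 then R else r' i) * cyclotomicFactor A ℓ i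
          = ∑ i ∈ Finset.range (n + 1), r' i * cyclotomicFactor A ℓ i := by
        refine Finset.sum_congr rfl fun i hi => ?_
        have : i ≠ n + 1 := by have := Finset.mem_range.1 hi; omega
        simp [this]
      have h2 : (fun i => if i = n + 1 then R else r' i) (n + 1) = R := by simp
      rw [h1, h2, ← hr'eq]
      exact hPQR

/-- support of `x * cyclotomicFactor i` lands in `J_i`. -/
lemma supp_mul_factor (hℓ : Nat.Prime ℓ) {i : ℕ} {x : LaurentPolynomial A}
    (hx : x ∈ cyclotomicBox A ℓ i) :
    ↑(x * cyclotomicFactor A ℓ i).coeff.support ⊆ Set.Icc (Lo ℓ i) (Hi ℓ i) := by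
  classical
  rw [mem_box_iff] at hx
  cases i with
  | zero =>
    rw [Bo_zero] at hx
    simpa [cyclotomicFactor, Hi_zero] using hx
  | succ n =>
    set m : ℤ := ((ℓ ^ n : ℕ) : ℤ) with hm
    have hmpos : (0:ℤ) ≤ m := by positivity
    have hxf : x * cyclotomicFactor A ℓ (n + 1) = x * T m - x := by
      rw [hm]
      show x * (T ((ℓ ^ n : ℕ) : ℤ) - 1) = _
      ring
    rw [hxf]
    intro k hk
    have hk' : k ∈ (x * T m).coeff.support ∪ x.coeff.support := Finsupp.support_sub (by exact hk)
    have hHi : Hi ℓ (n + 1) = Bo ℓ (n + 1) + m := rfl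
    rcases Finset.mem_union.1 hk' with h | h
    · have hsub : (x * (T m : LaurentPolynomial A)).coeff.support ⊆ Finset.image (· + m) x.coeff.support :=
        AddMonoidAlgebra.support_coeff_mul_single_subset x 1 m
      have h2 := hsub h
      rw [Finset.mem_image] at h2
      obtain ⟨a, ha, rfl⟩ := h2
      have ha' := hx ha
      rw [Set.mem_Icc] at ha' ⊢
      constructor
      · have := Lo_succ_le hℓ n
        omega
      · omega
    · have h2 := hx h
      rw [Set.mem_Icc] at h2 ⊢
      have := Bo_nonneg hℓ (n + 1)
      omega

lemma sum_supp (hℓ : Nat.Prime ℓ) (n : ℕ) (r : ℕ → LaurentPolynomial A)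
    (hr : ∀ i ≤ n, r i ∈ cyclotomicBox A ℓ i) :
    ↑(∑ i ∈ Finset.range (n + 1), r i * cyclotomicFactor A ℓ i).coeff.support
      ⊆ Set.Icc (Lo ℓ n) (Hi ℓ n) := by
  show _ ∈ AddMonoidAlgebra.supported A A _
  refine Submodule.sum_mem _ fun i hi => ?_
  have hi' : i ≤ n := by have := Finset.mem_range.1 hi; omega
  rw [AddMonoidAlgebra.mem_supported]
  refine le_trans (supp_mul_factor hℓ (hr i hi')) ?_
  exact Set.Icc_subset_Icc (Lo_le_of_le hℓ hi') (Hi_le_of_le hℓ hi')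

/-- `T m - 1` is a nonzerodivisor. -/
lemma T_sub_one_regular {m : ℕ} (hm : 0 < m) {x : LaurentPolynomial A}
    (h : x * (T ((m : ℕ) : ℤ) - 1) = 0) : x = 0 := by
  obtain ⟨d, p, hp⟩ := x.exists_T_pow
  have h1 : Polynomial.toLaurent (p * (Polynomial.X ^ m - 1)) = 0 := by
    rw [map_mul, hp, map_sub, Polynomial.toLaurent_X_pow, map_one, mul_right_comm, h,
      zero_mul]
  have h2 : p * (Polynomial.X ^ m - 1) = 0 := by
    apply Polynomial.toLaurent_injective
    rw [h1, map_zero]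
  have hmonic : (Polynomial.X ^ m - 1 : Polynomial A).Monic := by
    simpa using Polynomial.monic_X_pow_sub_C (1 : A) hm.ne'
  have h3 : p = 0 := by
    have := hmonic.isRegular.right
    have h4 : p * (Polynomial.X ^ m - 1) = 0 * (Polynomial.X ^ m - 1) := by
      rw [h2, zero_mul]
    exact this h4
  have h5 : x * T (d : ℤ) = 0 := by rw [← hp, h3, map_zero]
  exact (IsUnit.mul_left_eq_zero (isUnit_T (d : ℤ))).1 h5

/-- linear independence of the representation. -/
lemma indep (hℓ : Nat.Prime ℓ) :
    ∀ n : ℕ, ∀ r : ℕ → LaurentPolynomial A,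
      (∀ i ≤ n, r i ∈ cyclotomicBox A ℓ i) →
      (∑ i ∈ Finset.range (n + 1), r i * cyclotomicFactor A ℓ i) = 0 →
      ∀ i ≤ n, r i = 0 := by
  intro n
  induction n with
  | zero =>
    intro r _ hsum i hi
    interval_cases i
    simpa [cyclotomicFactor] using hsum
  | succ n ih =>
    intro r hr hsum
    set m : ℕ := ℓ ^ n with hm
    have hmpos : 0 < m := pow_pos hℓ.pos n
    set Q : LaurentPolynomial A :=
      ∑ i ∈ Finset.range (n + 1), r i * cyclotomicFactor A ℓ i with hQ
    have hsum' : Q + r (n + 1) * (T ((m : ℕ) : ℤ) - 1) = 0 := by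
      rw [hQ]
      rw [Finset.sum_range_succ] at hsum
      exact hsum
    -- map to ZMod m
    set ψ : LaurentPolynomial A →+* AddMonoidAlgebra A (ZMod m) :=
      AddMonoidAlgebra.mapDomainRingHom A (Int.castAddHom (ZMod m)) with hψ
    have hψT : ψ (T ((m : ℕ) : ℤ) - 1) = 0 := by
      have hT : ψ (T ((m : ℕ) : ℤ)) = 1 := by
        have h0 : (Int.castAddHom (ZMod m)) ((m : ℕ) : ℤ) = 0 := by
          simp
        calc ψ (T ((m : ℕ) : ℤ))
            = AddMonoidAlgebra.mapDomain (Int.castAddHom (ZMod m))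
                (AddMonoidAlgebra.single ((m : ℕ) : ℤ) (1 : A)) := rfl
          _ = AddMonoidAlgebra.single ((Int.castAddHom (ZMod m)) ((m : ℕ) : ℤ)) (1 : A) :=
              AddMonoidAlgebra.mapDomain_single
          _ = (1 : AddMonoidAlgebra A (ZMod m)) := by
              rw [h0]
              exact (AddMonoidAlgebra.one_def).symm
      rw [map_sub, hT, map_one, sub_self]
    have hψQ : ψ Q = 0 := by
      have := congrArg ψ hsum'
      rw [map_add, map_mul, hψT, mul_zero, add_zero, map_zero] at this
      exact this
    -- injectivity of ψ on things supported in J_n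
    have hQsupp : ↑Q.coeff.support ⊆ Set.Icc (Lo ℓ n) (Hi ℓ n) :=
      sum_supp hℓ n r (fun i hi => hr i (by omega))
    have hinj : Set.InjOn (fun k : ℤ => ((k : ZMod m)))
        (Set.Icc (Lo ℓ n) (Hi ℓ n)) := by
      intro a ha b hb hab
      have hab' : ((a : ZMod m)) = ((b : ZMod m)) := hab
      have hdvd : ((m : ℕ) : ℤ) ∣ a - b := by
        rw [← ZMod.intCast_zmod_eq_zero_iff_dvd]
        push_cast
        rw [hab']
        ring
      have hHi := Hi_sub_Lo hℓ n
      rw [Set.mem_Icc] at ha hb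
      have habs : |a - b| < ((m : ℕ) : ℤ) := by
        rw [abs_lt]
        constructor <;> omega
      have := Int.eq_zero_of_abs_lt_dvd hdvd habs
      omega
    have hQ0 : Q = 0 := by
      have h0 : (0 : ℤ →₀ A) ∈
          {w : ℤ →₀ A | ↑w.support ⊆ Set.Icc (Lo ℓ n) (Hi ℓ n)} := by
        show ↑(0 : ℤ →₀ A).support ⊆ Set.Icc (Lo ℓ n) (Hi ℓ n)
        simp
      have hQmem : Q.coeff ∈ {w : ℤ →₀ A | ↑w.support ⊆ Set.Icc (Lo ℓ n) (Hi ℓ n)} := hQsupp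
      rw [← AddMonoidAlgebra.coeff_eq_zero]
      refine Finsupp.mapDomain_injOn _ hinj hQmem h0 ?_
      show (ψ Q).coeff = (ψ 0).coeff
      rw [hψQ, map_zero]
    have hrn1 : r (n + 1) * (T ((m : ℕ) : ℤ) - 1) = 0 := by
      rw [hQ0, zero_add] at hsum'
      exact hsum'
    have hrtop : r (n + 1) = 0 := T_sub_one_regular hmpos hrn1
    intro i hi
    by_cases h : i = n + 1
    · rw [h]; exact hrtop
    · exact ih r (fun i' hi' => hr i' (by omega)) (by rw [← hQ]; exact hQ0) i (by omega)

/-- uniqueness, assuming `n₁ ≤ n₂`. -/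
lemma uniq_aux (hℓ : Nat.Prime ℓ) (P : LaurentPolynomial A)
    (n₁ n₂ : ℕ) (hn : n₁ ≤ n₂) (r₁ r₂ : ℕ → LaurentPolynomial A)
    (h₁ : (∀ i ≤ n₁, r₁ i ∈ cyclotomicBox A ℓ i) ∧ r₁ n₁ ≠ 0 ∧
        P = ∑ i ∈ Finset.range (n₁ + 1), r₁ i * cyclotomicFactor A ℓ i)
    (h₂ : (∀ i ≤ n₂, r₂ i ∈ cyclotomicBox A ℓ i) ∧ r₂ n₂ ≠ 0 ∧
        P = ∑ i ∈ Finset.range (n₂ + 1), r₂ i * cyclotomicFactor A ℓ i) :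
    n₁ = n₂ ∧ ∀ i ≤ n₁, r₁ i = r₂ i := by
  classical
  obtain ⟨hmem₁, hne₁, heq₁⟩ := h₁
  obtain ⟨hmem₂, hne₂, heq₂⟩ := h₂
  set r₁' : ℕ → LaurentPolynomial A := fun i => if i ≤ n₁ then r₁ i else 0 with hr₁'
  have hsub : Finset.range (n₁ + 1) ⊆ Finset.range (n₂ + 1) :=
    Finset.range_subset_range.2 (by omega)
  have heq₁' : P = ∑ i ∈ Finset.range (n₂ + 1), r₁' i * cyclotomicFactor A ℓ i := by
    have ha : ∑ i ∈ Finset.range (n₁ + 1), r₁ i * cyclotomicFactor A ℓ i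
        = ∑ i ∈ Finset.range (n₁ + 1), r₁' i * cyclotomicFactor A ℓ i := by
      refine Finset.sum_congr rfl fun i hi => ?_
      have hi' : i ≤ n₁ := by have := Finset.mem_range.1 hi; omega
      simp [hr₁', hi']
    have hb : ∑ i ∈ Finset.range (n₁ + 1), r₁' i * cyclotomicFactor A ℓ i
        = ∑ i ∈ Finset.range (n₂ + 1), r₁' i * cyclotomicFactor A ℓ i := by
      refine Finset.sum_subset hsub fun i hi hni => ?_
      have : ¬ i ≤ n₁ := fun hle => hni (Finset.mem_range.2 (by omega))
      simp [hr₁', this]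
    rw [heq₁, ha, hb]
  have hd : ∀ i ≤ n₂, r₁' i - r₂ i ∈ cyclotomicBox A ℓ i := by
    intro i hi
    refine Submodule.sub_mem _ ?_ (hmem₂ i hi)
    by_cases h : i ≤ n₁
    · simpa [hr₁', h] using hmem₁ i h
    · simp [hr₁', h]
  have hdsum : ∑ i ∈ Finset.range (n₂ + 1), (r₁' i - r₂ i) * cyclotomicFactor A ℓ i = 0 := by
    have : ∑ i ∈ Finset.range (n₂ + 1), (r₁' i - r₂ i) * cyclotomicFactor A ℓ i
        = (∑ i ∈ Finset.range (n₂ + 1), r₁' i * cyclotomicFactor A ℓ i)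
          - ∑ i ∈ Finset.range (n₂ + 1), r₂ i * cyclotomicFactor A ℓ i := by
      rw [← Finset.sum_sub_distrib]
      exact Finset.sum_congr rfl fun i _ => by ring
    rw [this, ← heq₁', ← heq₂, sub_self]
  have hzero : ∀ i ≤ n₂, r₁' i - r₂ i = 0 :=
    indep hℓ n₂ _ hd hdsum
  have hkey : ∀ i ≤ n₂, r₁' i = r₂ i := fun i hi => sub_eq_zero.1 (hzero i hi)
  have hn12 : n₁ = n₂ := by
    by_contra hne
    have hlt : n₁ < n₂ := by omega
    apply hne₂
    have h := (hkey n₂ le_rfl).symm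
    rw [h]
    simp [hr₁', Nat.not_le.2 hlt]
  refine ⟨hn12, fun i hi => ?_⟩
  have h := hkey i (by omega)
  rw [← h]
  simp [hr₁', hi]

end CycExpAux

/-- Lemma 2.2.3 (`euclidean_division`): over a commutative ring `A` in which the prime `ℓ` is
invertible, every nonzero Laurent polynomial `P` has a unique expression
`P = r₀ + r₁(z - 1) + r₂(z^ℓ - 1) + ⋯ + r_n(z^{ℓ^{n-1}} - 1)` with
`r_i ∈ A(-⌊φ(ℓ^i)/2⌋ ; φ(ℓ^i) - ⌊φ(ℓ^i)/2⌋ - 1)` and `r_n ≠ 0`. -/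
theorem cyclotomic_expansion_exists_unique {A : Type*} [CommRing A] {ℓ : ℕ}
    (hℓ : Nat.Prime ℓ) (hunit : IsUnit (ℓ : A))
    (P : LaurentPolynomial A) (hP : P ≠ 0) :
    (∃ n : ℕ, ∃ r : ℕ → LaurentPolynomial A,
      (∀ i ≤ n, r i ∈ cyclotomicBox A ℓ i) ∧ r n ≠ 0 ∧
        P = ∑ i ∈ Finset.range (n + 1), r i * cyclotomicFactor A ℓ i) ∧
    (∀ (n₁ n₂ : ℕ) (r₁ r₂ : ℕ → LaurentPolynomial A),
      ((∀ i ≤ n₁, r₁ i ∈ cyclotomicBox A ℓ i) ∧ r₁ n₁ ≠ 0 ∧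
        P = ∑ i ∈ Finset.range (n₁ + 1), r₁ i * cyclotomicFactor A ℓ i) →
      ((∀ i ≤ n₂, r₂ i ∈ cyclotomicBox A ℓ i) ∧ r₂ n₂ ≠ 0 ∧
        P = ∑ i ∈ Finset.range (n₂ + 1), r₂ i * cyclotomicFactor A ℓ i) →
      n₁ = n₂ ∧ ∀ i ≤ n₁, r₁ i = r₂ i) := by
  classical
  constructor
  · -- existence
    set S : ℕ := P.coeff.support.sup (fun k => k.natAbs) with hS
    set N : ℕ := S + 1 with hN
    have hcov : ↑P.coeff.support ⊆ Set.Icc (CycExpAux.Lo ℓ N) (CycExpAux.Hi ℓ N) := by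
      intro k hk
      have hk' : k.natAbs ≤ S := by
        rw [hS]
        exact Finset.le_sup (Finset.mem_coe.1 hk)
      have h1 : CycExpAux.Lo ℓ N ≤ -(N : ℤ) + 1 := CycExpAux.Lo_le hℓ N
      have h2 : (N : ℤ) - 1 ≤ CycExpAux.Hi ℓ N := CycExpAux.le_Hi hℓ N
      have h3 : (N : ℤ) = (S : ℤ) + 1 := by rw [hN]; push_cast; ring
      have hk'' : (k.natAbs : ℤ) ≤ (S : ℤ) := by exact_mod_cast hk'
      rw [Set.mem_Icc]
      constructor <;> omega
    obtain ⟨r, hrmem, hreq⟩ := CycExpAux.exists_rep hℓ N P hcov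
    have hex : ∃ i, i ≤ N ∧ r i ≠ 0 := by
      by_contra hno
      push_neg at hno
      apply hP
      rw [hreq]
      refine Finset.sum_eq_zero fun i hi => ?_
      have hiN : i ≤ N := by have := Finset.mem_range.1 hi; omega
      rw [hno i hiN, zero_mul]
    obtain ⟨i₀, hi₀N, hi₀⟩ := hex
    set n := Nat.findGreatest (fun i => r i ≠ 0) N with hn
    have hrn : r n ≠ 0 := Nat.findGreatest_spec (P := fun i => r i ≠ 0) hi₀N hi₀
    have hnN : n ≤ N := Nat.findGreatest_le N
    refine ⟨n, r, fun i hi => hrmem i (by omega), hrn, ?_⟩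
    have hs : ∑ i ∈ Finset.range (n + 1), r i * cyclotomicFactor A ℓ i
        = ∑ i ∈ Finset.range (N + 1), r i * cyclotomicFactor A ℓ i := by
      refine Finset.sum_subset (Finset.range_subset_range.2 (by omega)) fun i hi hni => ?_
      have h1 : i ≤ N := by have := Finset.mem_range.1 hi; omega
      have h2 : n < i := by
        rcases Nat.lt_or_ge n i with h | h
        · exact h
        · exact absurd (Finset.mem_range.2 (by omega)) hni
      have h3 : r i = 0 := by
        by_contra hri
        exact (Nat.findGreatest_is_greatest (P := fun i => r i ≠ 0) h2 h1) hri
      rw [h3, zero_mul]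
    rw [hreq]
    exact hs.symm
  · -- uniqueness
    intro n₁ n₂ r₁ r₂ h₁ h₂
    rcases le_total n₁ n₂ with h | h
    · exact CycExpAux.uniq_aux hℓ P n₁ n₂ h r₁ r₂ h₁ h₂
    · obtain ⟨hn, hr⟩ := CycExpAux.uniq_aux hℓ P n₂ n₁ h r₂ r₁ h₂ h₁
      exact ⟨hn.symm, fun i hi => (hr i (by omega)).symm⟩
end

section
/- Let ℓ be a prime number and A a commutative ring in which ℓ is invertible. The Laurent polynomial ring A[z^{±1}] is the internal direct sum of the A-submodules D_n, n ≥ 0, where D_0 is the submodule of constant Laurent polynomials and, for n ≥ 1, D_n = A(−⌊φ(ℓⁿ)/2⌋ ; φ(ℓⁿ) − ⌊φ(ℓⁿ)/2⌋ − 1) · (z^{ℓ^{n−1}} − 1). -/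
open LaurentPolynomial

/-- The submodule `D_n` of `A[z^{±1}]`:  `D_0 = A(0;0)` is the module of constants, and for
`n ≥ 1`, `D_n = A(-⌊φ(ℓ^n)/2⌋ ; φ(ℓ^n) - ⌊φ(ℓ^n)/2⌋ - 1) · (z^{ℓ^{n-1}} - 1)`. -/
noncomputable def cyclotomicD (A : Type*) [CommRing A] (ℓ n : ℕ) :
    Submodule A (LaurentPolynomial A) :=
  Submodule.map (LinearMap.mulRight A (cyclotomicFactor A ℓ n)) (cyclotomicBox A ℓ n)


namespace CycAux
variable {ℓ : ℕ}

/-! ### Numeric layer -/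

def hp (ℓ n : ℕ) : ℕ := (ℓ ^ n).totient / 2

def Iset (ℓ : ℕ) (n : ℕ) : Set ℤ :=
  Set.Icc (-(hp ℓ n : ℤ)) (((ℓ ^ n : ℕ) : ℤ) - (hp ℓ n : ℤ) - 1)

noncomputable def lev (ℓ : ℕ) (k : ℤ) : ℕ := sInf {n | k ∈ Iset ℓ n}

lemma totZ (hℓ : ℓ.Prime) (m : ℕ) :
    (((ℓ ^ (m+1)).totient : ℕ) : ℤ) = ((ℓ:ℤ))^(m+1) - (ℓ:ℤ)^m := by
  rw [Nat.totient_prime_pow hℓ (Nat.succ_pos m)]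
  have h1 : 1 ≤ ℓ := hℓ.one_lt.le
  push_cast [Nat.cast_sub h1]
  ring

lemma hpZ (ℓ n : ℕ) : 2 * (hp ℓ n : ℤ) ≤ ((ℓ ^ n).totient : ℤ) ∧
    ((ℓ ^ n).totient : ℤ) ≤ 2 * (hp ℓ n : ℤ) + 1 := by
  unfold hp
  constructor <;> exact_mod_cast (by omega : 2 * ((ℓ^n).totient/2) ≤ (ℓ^n).totient ∧ (ℓ^n).totient ≤ 2 * ((ℓ^n).totient/2) + 1).elim (fun a b => by omega)

lemma powZ (hℓ : ℓ.Prime) (n : ℕ) : 1 ≤ (ℓ:ℤ)^n ∧ 2 * (ℓ:ℤ)^n ≤ (ℓ:ℤ)^(n+1) := by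
  have h2 : (2:ℤ) ≤ (ℓ:ℤ) := by exact_mod_cast hℓ.two_le
  have h1 : (1:ℤ) ≤ (ℓ:ℤ)^n := one_le_pow₀ (by omega)
  refine ⟨h1, ?_⟩
  rw [pow_succ]
  nlinarith

lemma hp0 : hp ℓ 0 = 0 := by simp [hp]

lemma tot0 : ((ℓ ^ 0).totient : ℤ) = 1 := by simp

lemma hp_lt (hℓ : ℓ.Prime) (n : ℕ) : (hp ℓ n : ℤ) < (ℓ:ℤ)^n := by
  cases n with
  | zero => simp [hp0]
  | succ m =>
    have h1 := (hpZ ℓ (m+1)).1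
    have h2 := totZ hℓ m
    have h3 := (powZ hℓ m).1
    have h5 : (0:ℤ) ≤ (hp ℓ (m+1) : ℤ) := by positivity
    omega

lemma hp_mono (hℓ : ℓ.Prime) (n : ℕ) : (hp ℓ n : ℤ) ≤ (hp ℓ (n+1) : ℤ) := by
  have key : ((ℓ ^ n).totient : ℤ) ≤ ((ℓ ^ (n+1)).totient : ℤ) := by
    cases n with
    | zero =>
      rw [tot0, totZ hℓ 0]
      have := hℓ.two_le
      have : (2:ℤ) ≤ (ℓ:ℤ) := by exact_mod_cast this
      simp; omega
    | succ m =>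
      rw [totZ hℓ m, totZ hℓ (m+1)]
      have a := (powZ hℓ m).2
      have b := (powZ hℓ (m+1)).2
      have c := (powZ hℓ m).1
      omega
  have a := hpZ ℓ n; have b := hpZ ℓ (n+1)
  omega

lemma Iset_mono (hℓ : ℓ.Prime) {m n : ℕ} (h : m ≤ n) : Iset ℓ m ⊆ Iset ℓ n := by
  induction n with
  | zero => simpa [Nat.le_zero.mp h]
  | succ p ih =>
    rcases Nat.lt_or_ge m (p+1) with h' | h'
    · refine (ih (by omega)).trans ?_
      intro k hk
      simp only [Iset, Set.mem_Icc] at hk ⊢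
      have h1 := hp_mono hℓ p
      have h2 := (hpZ ℓ (p+1)).1
      have h3 := totZ hℓ p
      have h4 := (powZ hℓ p).1
      have h5 : (0:ℤ) ≤ (hp ℓ p : ℤ) := by positivity
      push_cast at hk ⊢
      omega
    · have : m = p+1 := by omega
      subst this; exact le_refl _

lemma mem_Iset_natAbs (hℓ : ℓ.Prime) (k : ℤ) : k ∈ Iset ℓ (k.natAbs + 2) := by
  set m := k.natAbs with hm
  have h2 : 2 ≤ ℓ := hℓ.two_le
  have hpow : (2:ℤ)^(m+1) ≤ (ℓ:ℤ)^(m+1) := by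
    exact pow_le_pow_left₀ (by norm_num) (by exact_mod_cast h2) (m+1)
  have h2p : ((m:ℤ)) + 1 ≤ 2^m := by
    calc (m:ℤ) + 1 ≤ ((2^m : ℕ) : ℤ) := by exact_mod_cast m.lt_two_pow_self
    _ = 2^m := by push_cast; ring
  have ht : ((ℓ^(m+2)).totient : ℤ) = (ℓ:ℤ)^(m+2) - (ℓ:ℤ)^(m+1) := totZ hℓ (m+1)
  have ha := hpZ ℓ (m+2)
  have hb : 2*(ℓ:ℤ)^(m+1) ≤ (ℓ:ℤ)^(m+2) := (powZ hℓ (m+1)).2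
  have hc := (powZ hℓ (m+1)).1
  have habs : (m:ℤ) = |k| := by rw [hm]; exact_mod_cast (Int.abs_eq_natAbs k).symm
  have h5 : (0:ℤ) ≤ (hp ℓ (m+2) : ℤ) := by positivity
  simp only [Iset, Set.mem_Icc]
  push_cast
  have hds : (2:ℤ)^(m+1) = 2*2^m := by ring
  have habs2 : k ≤ (m:ℤ) ∧ -(m:ℤ) ≤ k := by
    rw [habs]; exact ⟨le_abs_self k, neg_abs_le k⟩
  constructor <;> omega

/-! ### lev lemmas -/

lemma lev_mem (hℓ : ℓ.Prime) (k : ℤ) : k ∈ Iset ℓ (lev ℓ k) :=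
  Nat.sInf_mem (s := {n | k ∈ Iset ℓ n}) ⟨k.natAbs + 2, mem_Iset_natAbs hℓ k⟩

lemma lev_le {k : ℤ} {n : ℕ} (h : k ∈ Iset ℓ n) : lev ℓ k ≤ n :=
  Nat.sInf_le h

lemma not_mem_of_lt_lev {k : ℤ} {m : ℕ} (h : m < lev ℓ k) : k ∉ Iset ℓ m :=
  Nat.notMem_of_lt_sInf h

lemma Iset_zero : Iset ℓ 0 = {0} := by
  simp [Iset, hp0]

lemma lev_eq_zero_iff (hℓ : ℓ.Prime) {k : ℤ} : lev ℓ k = 0 ↔ k = 0 := by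
  constructor
  · intro h
    have := lev_mem hℓ k
    rw [h, Iset_zero] at this
    simpa using this
  · intro h
    subst h
    have : (0:ℤ) ∈ Iset ℓ 0 := by rw [Iset_zero]; rfl
    exact Nat.le_zero.mp (lev_le this)

lemma lev_eq_succ (hℓ : ℓ.Prime) {k : ℤ} {m : ℕ} (h1 : k ∈ Iset ℓ (m+1))
    (h2 : k ∉ Iset ℓ m) : lev ℓ k = m + 1 := by
  have hle := lev_le h1
  rcases Nat.lt_or_ge (lev ℓ k) (m+1) with h | h
  · exact absurd (Iset_mono hℓ (by omega) (lev_mem hℓ k)) h2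
  · omega

/-! ### the pivot family -/

noncomputable def ee (ℓ : ℕ) (k : ℤ) : ℤ :=
  if 0 < k then k - ((ℓ ^ (lev ℓ k - 1) : ℕ) : ℤ) else k + ((ℓ ^ (lev ℓ k - 1) : ℕ) : ℤ)

noncomputable def nu (ℓ : ℕ) (k : ℤ) : ℕ := ℓ ^ (lev ℓ k) + k.natAbs

/-- The key structure lemma. -/
lemma ee_struct (hℓ : ℓ.Prime) {k : ℤ} (hk : k ≠ 0) :
    (lev ℓ (ee ℓ k) < lev ℓ k) ∨
    (lev ℓ (ee ℓ k) = lev ℓ k ∧ (ee ℓ k).natAbs < k.natAbs) := by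
  have h1 : 1 ≤ lev ℓ k := by
    rcases Nat.eq_zero_or_pos (lev ℓ k) with h | h
    · exact absurd ((lev_eq_zero_iff hℓ).mp h) hk
    · exact h
  obtain ⟨m, hm⟩ : ∃ m, lev ℓ k = m + 1 := ⟨lev ℓ k - 1, by omega⟩
  have hmem := lev_mem hℓ k
  rw [hm] at hmem
  have hnot : k ∉ Iset ℓ m := not_mem_of_lt_lev (by omega)
  simp only [Iset, Set.mem_Icc] at hmem
  simp only [Iset, Set.mem_Icc, not_and_or, not_le] at hnot
  have hhm := hp_mono hℓ m
  have hhl := hp_lt hℓ m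
  have hhl1 := hp_lt hℓ (m+1)
  have ht := totZ hℓ m
  have ha := hpZ ℓ (m+1)
  have hc := (powZ hℓ m).1
  have h5 : (0:ℤ) ≤ (hp ℓ m : ℤ) := by positivity
  have h6 : (0:ℤ) ≤ (hp ℓ (m+1) : ℤ) := by positivity
  push_cast at hmem hnot ht ⊢
  have hee : ee ℓ k = if 0 < k then k - (ℓ:ℤ)^m else k + (ℓ:ℤ)^m := by
    simp only [ee, hm]
    push_cast
    norm_num
  -- e ∈ Iset ℓ (m+1)
  have hemem : ee ℓ k ∈ Iset ℓ (m+1) := by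
    simp only [Iset, Set.mem_Icc]
    push_cast
    rw [hee]
    rcases lt_trichotomy 0 k with h | h | h
    · rw [if_pos h]
      constructor <;> omega
    · omega
    · rw [if_neg (by omega)]
      constructor <;> omega
  have hlevle : lev ℓ (ee ℓ k) ≤ m + 1 := lev_le hemem
  rcases Nat.lt_or_ge (lev ℓ (ee ℓ k)) (m+1) with h | h
  · left; omega
  · right
    have heq : lev ℓ (ee ℓ k) = m + 1 := by omega
    refine ⟨by omega, ?_⟩
    have henot : ee ℓ k ∉ Iset ℓ m := not_mem_of_lt_lev (by omega)
    simp only [Iset, Set.mem_Icc, not_and_or, not_le] at henot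
    push_cast at henot
    rw [hee] at henot ⊢
    rcases lt_trichotomy 0 k with hs | hs | hs
    · rw [if_pos hs] at henot ⊢
      -- e = k - ℓ^m, e ≥ -hp m, so e > ℓ^m - hp m - 1 ≥ 0, e < k
      have he1 : -(hp ℓ m : ℤ) ≤ k - (ℓ:ℤ)^m := by omega
      have he2 : (ℓ:ℤ)^m - (hp ℓ m : ℤ) - 1 < k - (ℓ:ℤ)^m := by
        rcases henot with h' | h' <;> omega
      omega
    · omega
    · rw [if_neg (by omega)] at henot ⊢
      have he2 : k + (ℓ:ℤ)^m < -(hp ℓ m : ℤ) := by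
        rcases henot with h' | h' <;> omega
      omega

lemma natAbs_lt_pow (hℓ : ℓ.Prime) (k : ℤ) : k.natAbs < ℓ ^ (lev ℓ k) := by
  have hmem := lev_mem hℓ k
  simp only [Iset, Set.mem_Icc] at hmem
  have hhl := hp_lt hℓ (lev ℓ k)
  have h5 : (0:ℤ) ≤ (hp ℓ (lev ℓ k) : ℤ) := by positivity
  have habs : (k.natAbs : ℤ) = |k| := by exact_mod_cast (Int.abs_eq_natAbs _).symm
  have h6 : |k| ≤ k ∨ |k| ≤ -k := by
    rcases abs_cases k with ⟨h,_⟩|⟨h,_⟩ <;> omega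
  have : (k.natAbs : ℤ) < ((ℓ ^ (lev ℓ k) : ℕ) : ℤ) := by
    push_cast at hmem ⊢
    omega
  exact_mod_cast this

lemma nu_lt (hℓ : ℓ.Prime) {k : ℤ} (hk : k ≠ 0) : nu ℓ (ee ℓ k) < nu ℓ k := by
  have h2 : 2 ≤ ℓ := hℓ.two_le
  have hke : 1 ≤ k.natAbs := Int.natAbs_pos.mpr hk
  have he := natAbs_lt_pow hℓ (ee ℓ k)
  rcases ee_struct hℓ hk with h | ⟨h1, h2'⟩
  · have hstep : ℓ ^ (lev ℓ (ee ℓ k)) * 2 ≤ ℓ ^ (lev ℓ k) := by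
      calc ℓ ^ (lev ℓ (ee ℓ k)) * 2 ≤ ℓ ^ (lev ℓ (ee ℓ k)) * ℓ := by
            exact Nat.mul_le_mul_left _ h2
      _ = ℓ ^ (lev ℓ (ee ℓ k) + 1) := by rw [pow_succ]
      _ ≤ ℓ ^ (lev ℓ k) := Nat.pow_le_pow_right (by omega) (by omega)
    unfold nu
    omega
  · unfold nu
    rw [h1]
    omega

/-! ### Module layer -/

section Module
variable (A : Type*) [CommRing A]

noncomputable def vv (ℓ : ℕ) (k : ℤ) : LaurentPolynomial A :=
  if k = 0 then 1
  else if 0 < k then T k - T (ee ℓ k)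
  else T (ee ℓ k) - T k

def Pset (ℓ n : ℕ) : Set ℤ := {k | lev ℓ k = n}

def Bset (ℓ n : ℕ) : Set ℤ :=
  Set.Icc (-(((ℓ ^ n).totient / 2 : ℕ) : ℤ))
      (((ℓ ^ n).totient : ℤ) - (((ℓ ^ n).totient / 2 : ℕ) : ℤ) - 1)

lemma box_eq_span (ℓ n : ℕ) : cyclotomicBox A ℓ n =
    Submodule.span A ((fun s : ℤ => (T s : LaurentPolynomial A)) '' Bset ℓ n) := rfl

lemma mul_factor (s : ℤ) (m : ℕ) :
    (T s : LaurentPolynomial A) * cyclotomicFactor A ℓ (m+1)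
      = T (s + ((ℓ^m : ℕ) : ℤ)) - T s := by
  rw [cyclotomicFactor, mul_sub, mul_one, ← T_add]

lemma genset (hℓ : ℓ.Prime) (n : ℕ) :
    (fun q => q * cyclotomicFactor A ℓ n) ''
      ((fun s : ℤ => (T s : LaurentPolynomial A)) '' Bset ℓ n)
    = vv A ℓ '' Pset ℓ n := by
  rw [Set.image_image]
  cases n with
  | zero =>
    have hB : Bset ℓ 0 = {0} := by
      simp [Bset]
    have hP : Pset ℓ 0 = {0} := by
      ext k; simp [Pset, lev_eq_zero_iff hℓ]
    rw [hB, hP]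
    simp [cyclotomicFactor, vv, T_zero]
  | succ m =>
    have h2 : 2 ≤ ℓ := hℓ.two_le
    have ht := totZ hℓ m
    have ha := hpZ ℓ (m+1)
    have hhm := hp_mono hℓ m
    have hhl := hp_lt hℓ m
    have hhl1 := hp_lt hℓ (m+1)
    have hc := (powZ hℓ m).1
    have h5 : (0:ℤ) ≤ (hp ℓ m : ℤ) := by positivity
    have h6 : (0:ℤ) ≤ (hp ℓ (m+1) : ℤ) := by positivity
    apply Set.Subset.antisymm
    · rintro x ⟨s, hs, rfl⟩
      simp only [Bset, Set.mem_Icc] at hs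
      have hs' : -((hp ℓ (m+1) : ℕ) : ℤ) ≤ s ∧
          s ≤ ((ℓ^(m+1)).totient : ℤ) - (hp ℓ (m+1) : ℤ) - 1 := hs
      obtain ⟨hs1, hs2⟩ := hs'
      by_cases hcase : s < -(hp ℓ m : ℤ)
      · have hkmem : s ∈ Iset ℓ (m+1) := by
          simp only [Iset, Set.mem_Icc]; push_cast; omega
        have hknot : s ∉ Iset ℓ m := by
          simp only [Iset, Set.mem_Icc, not_and_or, not_le]; left; omega
        have hlevk := lev_eq_succ hℓ hkmem hknot
        have hk0 : s ≠ 0 := by omega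
        refine ⟨s, hlevk, ?_⟩
        show vv A ℓ s = T s * cyclotomicFactor A ℓ (m+1)
        rw [mul_factor, vv, if_neg hk0, if_neg (by omega : ¬ (0:ℤ) < s), ee, hlevk,
          if_neg (by omega : ¬ (0:ℤ) < s)]
        norm_num
      · have h0 : (0:ℤ) < s + ((ℓ^m : ℕ) : ℤ) := by push_cast; omega
        have hkmem : s + ((ℓ^m : ℕ) : ℤ) ∈ Iset ℓ (m+1) := by
          simp only [Iset, Set.mem_Icc]; push_cast; omega
        have hknot : s + ((ℓ^m : ℕ) : ℤ) ∉ Iset ℓ m := by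
          simp only [Iset, Set.mem_Icc, not_and_or, not_le]; right; push_cast; omega
        have hlevk := lev_eq_succ hℓ hkmem hknot
        refine ⟨s + ((ℓ^m : ℕ) : ℤ), hlevk, ?_⟩
        show vv A ℓ (s + ((ℓ^m : ℕ) : ℤ)) = T s * cyclotomicFactor A ℓ (m+1)
        rw [mul_factor, vv, if_neg (by omega : ¬ s + ((ℓ^m : ℕ) : ℤ) = 0), if_pos h0, ee, hlevk,
          if_pos h0]
        norm_num
    · rintro x ⟨k, hk, rfl⟩
      simp only [Pset, Set.mem_setOf_eq] at hk
      have hk0 : k ≠ 0 := by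
        intro h
        have h0 : lev ℓ (0:ℤ) = 0 := (lev_eq_zero_iff hℓ).mpr rfl
        rw [h] at hk
        omega
      have hkmem := lev_mem hℓ k
      rw [hk] at hkmem
      have hknot : k ∉ Iset ℓ m := not_mem_of_lt_lev (by omega)
      simp only [Iset, Set.mem_Icc] at hkmem
      simp only [Iset, Set.mem_Icc, not_and_or, not_le] at hknot
      push_cast at hkmem hknot
      have heek : ∀ c : Prop, True := fun _ => trivial
      rcases lt_or_gt_of_ne hk0 with hneg | hpos
      · have hbox : -((hp ℓ (m+1) : ℕ) : ℤ) ≤ k ∧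
            k ≤ ((ℓ^(m+1)).totient : ℤ) - (hp ℓ (m+1) : ℤ) - 1 := by
          constructor <;> omega
        refine ⟨k, ?_, ?_⟩
        · simp only [Bset, Set.mem_Icc]; exact hbox
        · show T k * cyclotomicFactor A ℓ (m+1) = vv A ℓ k
          rw [mul_factor, vv, if_neg hk0, if_neg (by omega : ¬ (0:ℤ) < k), ee, hk,
            if_neg (by omega : ¬ (0:ℤ) < k)]
          norm_num
      · have hbox : -((hp ℓ (m+1) : ℕ) : ℤ) ≤ k - ((ℓ^m : ℕ) : ℤ) ∧
            k - ((ℓ^m : ℕ) : ℤ) ≤ ((ℓ^(m+1)).totient : ℤ) - (hp ℓ (m+1) : ℤ) - 1 := by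
          push_cast
          constructor <;> omega
        refine ⟨k - ((ℓ^m : ℕ) : ℤ), ?_, ?_⟩
        · simp only [Bset, Set.mem_Icc]; exact hbox
        · show T (k - ((ℓ^m : ℕ) : ℤ)) * cyclotomicFactor A ℓ (m+1) = vv A ℓ k
          rw [mul_factor, vv, if_neg hk0, if_pos hpos, ee, hk, if_pos hpos]
          have h2' : k - ((ℓ^m : ℕ) : ℤ) + ((ℓ^m : ℕ) : ℤ) = k := by ring
          rw [h2']
          norm_num

lemma D_eq (hℓ : ℓ.Prime) (n : ℕ) :
    cyclotomicD A ℓ n = Submodule.span A (vv A ℓ '' Pset ℓ n) := by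
  rw [cyclotomicD, box_eq_span, Submodule.map_span, ← genset A hℓ n]
  congr 1

lemma ee_ne (hℓ : ℓ.Prime) (k : ℤ) : ee ℓ k ≠ k := by
  have h1 : 0 < ℓ ^ (lev ℓ k - 1) := pow_pos (by have := hℓ.two_le; omega) _
  have h2 : (1:ℤ) ≤ ((ℓ ^ (lev ℓ k - 1) : ℕ) : ℤ) := by exact_mod_cast h1
  rw [ee]; split <;> omega

lemma vv_apply_self (hℓ : ℓ.Prime) (k : ℤ) (hk : k ≠ 0) :
    (vv A ℓ k).coeff k = if 0 < k then (1:A) else -1 := by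
  have hne : ee ℓ k ≠ k := ee_ne hℓ k
  rw [vv, if_neg hk]
  split
  · rw [AddMonoidAlgebra.coeff_sub, Finsupp.sub_apply]
    simp [hne]
  · rw [AddMonoidAlgebra.coeff_sub, Finsupp.sub_apply]
    simp [hne]

lemma vv_apply_ne (hℓ : ℓ.Prime) (j k : ℤ) (hj : j ≠ k)
    (hje : j ≠ 0 → ee ℓ j ≠ k) : (vv A ℓ j).coeff k = 0 := by
  rw [vv]
  split
  · next h0 =>
    subst h0
    rw [← T_zero, T_apply, if_neg hj]
  · next h0 =>
    split <;> rw [AddMonoidAlgebra.coeff_sub, Finsupp.sub_apply] <;> simp [hj, hje h0]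

lemma indep_aux (hℓ : ℓ.Prime) (s : Finset ℤ) :
    ∀ g : ℤ → A, (∑ i ∈ s, g i • vv A ℓ i) = 0 → ∀ i ∈ s, g i = 0 := by
  induction s using Finset.strongInduction with
  | _ s ih =>
    intro g hsum i hi
    have hne : s.Nonempty := ⟨i, hi⟩
    obtain ⟨k, hk, hmax⟩ := Finset.exists_max_image s (nu ℓ) hne
    have hcoef : ∀ j ∈ s, j ≠ k → g j * (vv A ℓ j).coeff k = 0 := by
      intro j hj hjk
      have hvk : (vv A ℓ j).coeff k = 0 := by
        apply vv_apply_ne A hℓ j k hjk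
        intro hj0 heq
        have := nu_lt hℓ hj0
        rw [heq] at this
        exact absurd (hmax j hj) (by omega)
      rw [hvk, mul_zero]
    have h2 : (∑ j ∈ s, g j • vv A ℓ j).coeff k = 0 := by rw [hsum]; rfl
    rw [AddMonoidAlgebra.coeff_sum, Finset.sum_apply'] at h2
    have h3 : ∀ j, ((g j • vv A ℓ j).coeff k : A) = g j * (vv A ℓ j).coeff k := fun j => by
      rw [AddMonoidAlgebra.coeff_smul_apply, smul_eq_mul]
    rw [Finset.sum_congr rfl (fun j _ => h3 j), Finset.sum_eq_single_of_mem k hk hcoef] at h2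
    have hgk : g k = 0 := by
      by_cases hk0 : k = 0
      · subst hk0
        have hv1 : (vv A ℓ 0).coeff 0 = 1 := by
          rw [vv, if_pos rfl, ← T_zero, T_apply, if_pos rfl]
        rw [hv1, mul_one] at h2
        exact h2
      · rw [vv_apply_self A hℓ k hk0] at h2
        split at h2
        · simpa using h2
        · have : -(g k) = 0 := by rw [← mul_neg_one]; exact h2
          simpa using this
    rcases eq_or_ne i k with rfl | hik
    · exact hgk
    · have hsum' : ∑ j ∈ s.erase k, g j • vv A ℓ j = 0 := by
        rw [← Finset.add_sum_erase s _ hk, hgk, zero_smul, zero_add] at hsum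
        exact hsum
      exact ih (s.erase k) (Finset.erase_ssubset hk) g hsum' i
        (Finset.mem_erase.mpr ⟨hik, hi⟩)

lemma vv_indep (hℓ : ℓ.Prime) : LinearIndependent A (vv A ℓ) :=
  linearIndependent_iff'.mpr fun s g h i hi => indep_aux A hℓ s g h i hi

lemma vv_mem_D (hℓ : ℓ.Prime) (k : ℤ) :
    vv A ℓ k ∈ cyclotomicD A ℓ (lev ℓ k) := by
  rw [D_eq A hℓ]
  exact Submodule.subset_span ⟨k, rfl, rfl⟩

lemma T_mem_iSup (hℓ : ℓ.Prime) : ∀ (N : ℕ) (k : ℤ), nu ℓ k ≤ N →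
    (T k : LaurentPolynomial A) ∈ ⨆ n, cyclotomicD A ℓ n := by
  intro N
  induction N using Nat.strong_induction_on with
  | _ N ih =>
    intro k hN
    by_cases hk : k = 0
    · subst hk
      have h1 : (T 0 : LaurentPolynomial A) = vv A ℓ 0 := by
        rw [vv, if_pos rfl, T_zero]
      rw [h1]
      exact Submodule.mem_iSup_of_mem _ (vv_mem_D A hℓ 0)
    · have hlt := nu_lt hℓ hk
      have hp1 : 0 < ℓ ^ (lev ℓ k) := pow_pos (by have := hℓ.two_le; omega) _
      have hN1 : 1 ≤ N := by unfold nu at hN; omega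
      have hTe : (T (ee ℓ k) : LaurentPolynomial A) ∈ ⨆ n, cyclotomicD A ℓ n :=
        ih (N-1) (by omega) (ee ℓ k) (by omega)
      have hv := Submodule.mem_iSup_of_mem (lev ℓ k) (vv_mem_D A hℓ k)
      rcases lt_or_gt_of_ne hk with hneg | hpos
      · have h1 : (T k : LaurentPolynomial A) = T (ee ℓ k) - vv A ℓ k := by
          rw [vv, if_neg hk, if_neg (by omega)]; ring
        rw [h1]; exact sub_mem hTe hv
      · have h1 : (T k : LaurentPolynomial A) = vv A ℓ k + T (ee ℓ k) := by
          rw [vv, if_neg hk, if_pos hpos]; ring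
        rw [h1]; exact add_mem hv hTe

lemma iSup_top (hℓ : ℓ.Prime) : (⨆ n, cyclotomicD A ℓ n) = ⊤ := by
  rw [eq_top_iff]
  intro x hx
  clear hx
  induction x using LaurentPolynomial.induction_on' with
  | add p q hp' hq' => exact add_mem hp' hq'
  | C_mul_T n a =>
    have h1 : (C a * T n : LaurentPolynomial A) = a • T n := by
      rw [← single_eq_C_mul_T,
        show (T n : LaurentPolynomial A) = AddMonoidAlgebra.single n 1 from rfl,
        AddMonoidAlgebra.smul_single', mul_one]
    rw [h1]
    exact Submodule.smul_mem _ a (T_mem_iSup A hℓ (nu ℓ n) n le_rfl)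

lemma indepD (hℓ : ℓ.Prime) : iSupIndep (fun n : ℕ => cyclotomicD A ℓ n) := by
  rw [iSupIndep_def]
  intro n
  have hle : (⨆ (j) (_ : j ≠ n), cyclotomicD A ℓ j) ≤
      Submodule.span A (vv A ℓ '' (⋃ (j) (_ : j ≠ n), Pset ℓ j)) := by
    refine iSup_le fun j => iSup_le fun hj => ?_
    rw [D_eq A hℓ j]
    exact Submodule.span_mono (Set.image_mono
      (Set.subset_iUnion₂ (s := fun j (_ : j ≠ n) => Pset ℓ j) j hj))
  refine Disjoint.mono_right hle ?_
  rw [D_eq A hℓ n]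
  apply (vv_indep A hℓ).disjoint_span_image
  rw [Set.disjoint_left]
  rintro k hk hk'
  simp only [Set.mem_iUnion] at hk'
  obtain ⟨j, hj, hkj⟩ := hk'
  exact hj ((hkj : lev ℓ k = j).symm.trans (hk : lev ℓ k = n))

end Module

end CycAux

/-- The decomposition `A[z^{±1}] = ⊕_{n ≥ 0} D_n` as an internal direct sum of `A`-modules,
where `ℓ` is a prime invertible in the commutative ring `A`. -/
theorem laurent_isInternal_cyclotomicD {A : Type*} [CommRing A] {ℓ : ℕ}
    (hℓ : Nat.Prime ℓ) (hunit : IsUnit (ℓ : A)) :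
    DirectSum.IsInternal (fun n : ℕ => cyclotomicD A ℓ n) :=
  DirectSum.isInternal_submodule_of_iSupIndep_of_iSup_eq_top
    (CycAux.indepD A hℓ) (CycAux.iSup_top A hℓ)
end

section
/- Let ℓ be a prime number and A a commutative ring in which ℓ is invertible. For every n ≥ 0, the composite of the inclusion D_n ↪ A[z^{±1}] with the quotient map A[z^{±1}] → A[z^{±1}]/(Φ_{ℓⁿ}) (quotient by the ideal generated by the ℓⁿ-th cyclotomic polynomial) is an isomorphism of A-modules. -/
open LaurentPolynomial

/-- The `ℓⁿ`-th cyclotomic polynomial `Φ_{ℓⁿ}`, viewed as an element of `A[z^{±1}]`. -/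
noncomputable def cyclotomicLaurent (A : Type*) [CommRing A] (ℓ n : ℕ) :
    LaurentPolynomial A :=
  Polynomial.toLaurent (Polynomial.cyclotomic (ℓ ^ n) A)

lemma auxSumId {R : Type*} [CommRing R] (x : R) (p : ℕ) :
    (x - 1) * ∑ i ∈ Finset.range p, (i : R) * x ^ i
      = ((p : R) - 1) * x ^ p + 1 - ∑ i ∈ Finset.range p, x ^ i := by
  induction p with
  | zero => simp
  | succ p ih =>
    rw [Finset.sum_range_succ, Finset.sum_range_succ (f := fun i => x ^ i), mul_add, ih]
    push_cast
    ring

lemma auxSumUnit {R : Type*} [CommRing R] {x : R} {p : ℕ}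
    (h : ∑ i ∈ Finset.range p, x ^ i = 0) :
    (x - 1) * ∑ i ∈ Finset.range p, (i : R) * x ^ i = (p : R) := by
  have hx : x ^ p = 1 := by
    have h2 := geom_sum_mul x p
    rw [h, zero_mul] at h2
    linear_combination -h2
  rw [auxSumId, hx, h]; ring

lemma cyclCoeffZeroUnit (A : Type*) [CommRing A] {ℓ : ℕ} (hℓ : ℓ.Prime) (n : ℕ) :
    IsUnit ((Polynomial.cyclotomic (ℓ ^ n) A).coeff 0) := by
  rcases Nat.eq_zero_or_pos n with rfl | hn
  · rw [pow_zero, Polynomial.cyclotomic_one]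
    have h : (Polynomial.X - 1 : Polynomial A).coeff 0 = -1 := by simp
    rw [h]
    exact isUnit_one.neg
  · rw [Polynomial.cyclotomic_coeff_zero]
    · exact isUnit_one
    · calc 1 < ℓ := hℓ.one_lt
        _ ≤ ℓ ^ n := Nat.le_self_pow hn.ne' ℓ

lemma cyclBasis (A : Type*) [CommRing A] [Nontrivial A] {ℓ : ℕ} (hℓ : ℓ.Prime) (n : ℕ) :
    ∃ B : Module.Basis (Fin (ℓ ^ n).totient) A
      (LaurentPolynomial A ⧸ Ideal.span {cyclotomicLaurent A ℓ n}),
      ∀ i : Fin (ℓ ^ n).totient,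
        B i = Ideal.Quotient.mk (Ideal.span {cyclotomicLaurent A ℓ n}) (T (i : ℕ)) := by
  set I : Ideal (LaurentPolynomial A) := Ideal.span {cyclotomicLaurent A ℓ n} with hIdef
  set Φ : Polynomial A := Polynomial.cyclotomic (ℓ ^ n) A with hΦdef
  have hcl : cyclotomicLaurent A ℓ n = Polynomial.toLaurent Φ := rfl
  set mkq : LaurentPolynomial A →+* LaurentPolynomial A ⧸ I := Ideal.Quotient.mk I with hmkq
  set ψ : Polynomial A →ₐ[A] (LaurentPolynomial A ⧸ I) :=
    (Ideal.Quotient.mkₐ A I).comp Polynomial.toLaurentAlg with hψdef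
  have hψ : ∀ p : Polynomial A, ψ p = mkq (Polynomial.toLaurent p) := fun p => rfl
  have hψΦ : ψ Φ = 0 := by
    rw [hψ, ← hcl]
    exact Ideal.Quotient.eq_zero_iff_mem.mpr (Ideal.subset_span rfl)
  obtain ⟨c, hc⟩ := (cyclCoeffZeroUnit A hℓ n).exists_right_inv
  have hCc : Polynomial.C c * Polynomial.C (Φ.coeff 0) = 1 := by
    rw [← Polynomial.C_mul, mul_comm c, hc, Polynomial.C_1]
  have hψX : ψ Polynomial.X = mkq (T 1) := by
    rw [hψ, Polynomial.toLaurent_X]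
  have hp : Polynomial.X * (-(Polynomial.C c * Φ.divX)) = -(Polynomial.C c) * Φ + 1 := by
    linear_combination hCc - Polynomial.C c * Polynomial.X_mul_divX_add Φ
  have h1 : mkq (T 1) * ψ (-(Polynomial.C c * Φ.divX)) = 1 := by
    rw [← hψX, ← map_mul, hp, map_add, map_one, map_mul, hψΦ, mul_zero, zero_add]
  have h2 : mkq (T (-1)) * mkq (T 1) = 1 := by
    rw [← map_mul, ← T_add]
    norm_num
  have hTneg : mkq (T (-1)) = ψ (-(Polynomial.C c * Φ.divX)) := by
    calc mkq (T (-1))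
        = mkq (T (-1)) * (mkq (T 1) * ψ (-(Polynomial.C c * Φ.divX))) := by rw [h1, mul_one]
      _ = (mkq (T (-1)) * mkq (T 1)) * ψ (-(Polynomial.C c * Φ.divX)) := (mul_assoc _ _ _).symm
      _ = ψ (-(Polynomial.C c * Φ.divX)) := by rw [h2, one_mul]
  have hTmem : ∀ s : ℤ, mkq (T s) ∈ ψ.range := by
    intro s
    induction s using Int.induction_on with
    | zero => rw [T_zero, map_one]; exact one_mem _
    | succ k ih =>
      rw [T_add, map_mul]
      exact mul_mem ih ⟨Polynomial.X, hψX⟩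
    | pred k ih =>
      rw [show (-(k : ℤ) - 1) = (-(k : ℤ)) + (-1) by ring, T_add, map_mul, hTneg]
      exact mul_mem ih ⟨_, rfl⟩
  have hmem : ∀ v : LaurentPolynomial A, mkq v ∈ ψ.range := by
    intro v
    induction v using LaurentPolynomial.induction_on_mul_T with
    | mul_T f k =>
      rw [map_mul]
      exact mul_mem ⟨_, rfl⟩ (hTmem _)
  have hψsurj : Function.Surjective ψ := by
    intro q
    obtain ⟨v, rfl⟩ := Ideal.Quotient.mk_surjective (I := I) q
    exact (AlgHom.mem_range ψ).mp (hmem v)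
  have hker : RingHom.ker ψ = Ideal.span {Φ} := by
    ext p
    rw [RingHom.mem_ker, Ideal.mem_span_singleton]
    constructor
    · intro hp
      rw [hψ, Ideal.Quotient.eq_zero_iff_mem, hIdef, hcl, Ideal.mem_span_singleton] at hp
      obtain ⟨q, hq⟩ := hp
      obtain ⟨k, q', hq'⟩ := q.exists_T_pow
      have heq : Polynomial.toLaurent (p * Polynomial.X ^ k) = Polynomial.toLaurent (Φ * q') := by
        rw [map_mul, map_mul, Polynomial.toLaurent_X_pow, hq, hq']
        ring
      have hdvd : Φ ∣ p * Polynomial.X ^ k := ⟨q', Polynomial.toLaurent_injective heq⟩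
      have hcop : IsCoprime Φ (Polynomial.X ^ k : Polynomial A) := by
        apply IsCoprime.pow_right
        exact ⟨Polynomial.C c, -(Polynomial.C c * Φ.divX), by
          linear_combination hCc - Polynomial.C c * Polynomial.X_mul_divX_add Φ⟩
      exact hcop.dvd_of_dvd_mul_right hdvd
    · rintro ⟨q, rfl⟩
      rw [map_mul, hψΦ, zero_mul]
  let e : (AdjoinRoot Φ) ≃ₐ[A] (LaurentPolynomial A ⧸ I) :=
    (Ideal.quotientEquivAlgOfEq A hker.symm).trans (Ideal.quotientKerAlgEquivOfSurjective hψsurj)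
  have he : ∀ p : Polynomial A, e (AdjoinRoot.mk Φ p) = ψ p := by
    intro p
    show (Ideal.quotientKerAlgEquivOfSurjective hψsurj)
      ((Ideal.quotientEquivAlgOfEq A hker.symm) (Ideal.Quotient.mk _ p)) = ψ p
    rw [Ideal.quotientEquivAlgOfEq_mk]
    exact Ideal.quotientKerAlgEquivOfSurjective_mk hψsurj p
  let pb := AdjoinRoot.powerBasis' (Polynomial.cyclotomic.monic (ℓ ^ n) A)
  have hd : pb.dim = (ℓ ^ n).totient := by
    show Φ.natDegree = _
    exact Polynomial.natDegree_cyclotomic _ _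
  let B0 : Module.Basis (Fin pb.dim) A (LaurentPolynomial A ⧸ I) := pb.basis.map e.toLinearEquiv
  refine ⟨B0.reindex (finCongr hd), ?_⟩
  intro i
  rw [Module.Basis.reindex_apply]
  have hB0 : ∀ j : Fin pb.dim, B0 j = mkq (T (j : ℕ)) := by
    intro j
    rw [show B0 j = e (pb.basis j) from rfl, pb.basis_eq_pow, map_pow]
    have hgen : e pb.gen = mkq (T 1) := by
      rw [show pb.gen = AdjoinRoot.root Φ from rfl]
      rw [show AdjoinRoot.root Φ = AdjoinRoot.mk Φ Polynomial.X from rfl, he, hψX]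
    rw [hgen, ← map_pow, T_pow, mul_one]
  rw [hB0]
  congr 2

lemma cyclFactorUnit {A : Type*} [CommRing A] {ℓ : ℕ} (hℓ : ℓ.Prime)
    (hunit : IsUnit (ℓ : A)) (n : ℕ) :
    IsUnit (Ideal.Quotient.mk (Ideal.span {cyclotomicLaurent A ℓ n})
      (cyclotomicFactor A ℓ n)) := by
  cases n with
  | zero => rw [show cyclotomicFactor A ℓ 0 = 1 from rfl, map_one]; exact isUnit_one
  | succ m =>
    set I : Ideal (LaurentPolynomial A) := Ideal.span {cyclotomicLaurent A ℓ (m + 1)} with hIdef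
    set mkq : LaurentPolynomial A →+* LaurentPolynomial A ⧸ I := Ideal.Quotient.mk I with hmkq
    set x : LaurentPolynomial A ⧸ I := mkq (T ((ℓ ^ m : ℕ) : ℤ)) with hx
    have hcl : cyclotomicLaurent A ℓ (m + 1)
        = ∑ i ∈ Finset.range ℓ, (T ((ℓ ^ m : ℕ) : ℤ) : LaurentPolynomial A) ^ i := by
      show Polynomial.toLaurent (Polynomial.cyclotomic (ℓ ^ (m + 1)) A) = _
      rw [Polynomial.cyclotomic_prime_pow_eq_geom_sum hℓ, map_sum]
      refine Finset.sum_congr rfl fun i _ => ?_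
      rw [map_pow, Polynomial.toLaurent_X_pow]
    have hgeom : ∑ i ∈ Finset.range ℓ, x ^ i = 0 := by
      have h0 : mkq (cyclotomicLaurent A ℓ (m + 1)) = 0 :=
        Ideal.Quotient.eq_zero_iff_mem.mpr (Ideal.subset_span rfl)
      rw [hcl, map_sum] at h0
      rw [← h0]
      exact Finset.sum_congr rfl fun i _ => by rw [hx, ← map_pow]
    have key := auxSumUnit hgeom
    have hfac : mkq (cyclotomicFactor A ℓ (m + 1)) = x - 1 := by
      rw [show cyclotomicFactor A ℓ (m + 1) = T ((ℓ ^ m : ℕ) : ℤ) - 1 from rfl,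
        map_sub, map_one, hx]
    rw [hfac]
    have hℓQ : IsUnit ((ℓ : ℕ) : LaurentPolynomial A ⧸ I) := by
      have h2 := hunit.map (algebraMap A (LaurentPolynomial A ⧸ I))
      rwa [map_natCast] at h2
    rw [← key] at hℓQ
    exact isUnit_of_mul_isUnit_left hℓQ

lemma cyclBoxEq (A : Type*) [CommRing A] (ℓ n : ℕ) :
    cyclotomicBox A ℓ n = Submodule.span A (Set.range fun i : Fin (ℓ ^ n).totient =>
      (T (-(((ℓ ^ n).totient / 2 : ℕ) : ℤ) + (i : ℕ)) : LaurentPolynomial A)) := by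
  unfold cyclotomicBox
  congr 1
  ext y
  simp only [Set.mem_image, Set.mem_Icc, Set.mem_range]
  constructor
  · rintro ⟨s, ⟨h1, h2⟩, rfl⟩
    refine ⟨⟨(s + (((ℓ ^ n).totient / 2 : ℕ) : ℤ)).toNat, by omega⟩, ?_⟩
    congr 1
    push_cast
    omega
  · rintro ⟨i, rfl⟩
    have hi := i.isLt
    exact ⟨-(((ℓ ^ n).totient / 2 : ℕ) : ℤ) + (i : ℕ), by omega, rfl⟩


set_option maxHeartbeats 1000000 in
/-- For a prime `ℓ` invertible in the commutative ring `A` and every `n ≥ 0`, the composite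
`D_n ↪ A[z^{±1}] → A[z^{±1}]/(Φ_{ℓⁿ})` of the inclusion with the quotient map modulo the
ideal generated by the `ℓⁿ`-th cyclotomic polynomial is an isomorphism of `A`-modules. -/
theorem cyclotomicD_to_quotient_bijective {A : Type*} [CommRing A] {ℓ : ℕ}
    (hℓ : Nat.Prime ℓ) (hunit : IsUnit (ℓ : A)) (n : ℕ) :
    Function.Bijective
      ((Ideal.Quotient.mkₐ A (Ideal.span {cyclotomicLaurent A ℓ n})).toLinearMap ∘ₗ
        (cyclotomicD A ℓ n).subtype) := by
  rcases subsingleton_or_nontrivial A with hA | hA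
  · haveI := Module.subsingleton A
      (LaurentPolynomial A ⧸ Ideal.span {cyclotomicLaurent A ℓ n})
    haveI := Module.subsingleton A (LaurentPolynomial A)
    exact ⟨fun a b _ => Subsingleton.elim a b, fun y => ⟨0, Subsingleton.elim _ _⟩⟩
  obtain ⟨B, hB⟩ := cyclBasis A hℓ n
  have hfu := cyclFactorUnit hℓ hunit n
  have hTu : ∀ s : ℤ, IsUnit (Ideal.Quotient.mk (Ideal.span {cyclotomicLaurent A ℓ n}) (T s)) :=
    fun s => (isUnit_T s).map _
  -- the unit w
  obtain ⟨w, hw⟩ := ((hTu (-(((ℓ ^ n).totient / 2 : ℕ) : ℤ))).mul hfu)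
  have hmkₐ : ∀ y : LaurentPolynomial A,
      (Ideal.Quotient.mkₐ A (Ideal.span {cyclotomicLaurent A ℓ n})).toLinearMap y
        = Ideal.Quotient.mk (Ideal.span {cyclotomicLaurent A ℓ n}) y := fun y => rfl
  constructor
  · -- injectivity
    apply LinearMap.ker_eq_bot.mp
    rw [Submodule.eq_bot_iff]
    rintro ⟨y, hyD⟩ hv
    rw [LinearMap.mem_ker] at hv
    have hy0 : Ideal.Quotient.mk (Ideal.span {cyclotomicLaurent A ℓ n}) y = 0 := hv
    obtain ⟨x, hx, hxy⟩ := hyD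
    have hxy' : x * cyclotomicFactor A ℓ n = y := hxy
    -- cancel the unit mk f
    obtain ⟨u, hu⟩ := hfu
    have hx0 : Ideal.Quotient.mk (Ideal.span {cyclotomicLaurent A ℓ n}) x = 0 := by
      calc Ideal.Quotient.mk (Ideal.span {cyclotomicLaurent A ℓ n}) x
          = Ideal.Quotient.mk (Ideal.span {cyclotomicLaurent A ℓ n}) x
            * (Ideal.Quotient.mk (Ideal.span {cyclotomicLaurent A ℓ n})
                (cyclotomicFactor A ℓ n) * ↑u⁻¹) := by
            rw [← hu, Units.mul_inv, mul_one]
        _ = (Ideal.Quotient.mk (Ideal.span {cyclotomicLaurent A ℓ n})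
              (x * cyclotomicFactor A ℓ n)) * ↑u⁻¹ := by rw [map_mul, mul_assoc]
        _ = 0 := by rw [hxy', hy0, zero_mul]
    rw [cyclBoxEq] at hx
    rw [SetLike.mem_coe, Submodule.mem_span_range_iff_exists_fun] at hx
    obtain ⟨cv, hcv⟩ := hx
    -- push through the quotient linear map
    have h1 : ∀ i : Fin (ℓ ^ n).totient,
        (Ideal.Quotient.mkₐ A (Ideal.span {cyclotomicLaurent A ℓ n})).toLinearMap
          (cv i • T (-(((ℓ ^ n).totient / 2 : ℕ) : ℤ) + (i : ℕ)))
        = cv i • (B i * Ideal.Quotient.mk (Ideal.span {cyclotomicLaurent A ℓ n})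
            (T (-(((ℓ ^ n).totient / 2 : ℕ) : ℤ)))) := by
      intro i
      rw [LinearMap.map_smul, hmkₐ, T_add, map_mul, hB i,
        mul_comm]
    have hsum : ∑ i : Fin (ℓ ^ n).totient,
        cv i • (B i * Ideal.Quotient.mk (Ideal.span {cyclotomicLaurent A ℓ n})
          (T (-(((ℓ ^ n).totient / 2 : ℕ) : ℤ)))) = 0 := by
      calc ∑ i : Fin (ℓ ^ n).totient,
          cv i • (B i * Ideal.Quotient.mk (Ideal.span {cyclotomicLaurent A ℓ n})
            (T (-(((ℓ ^ n).totient / 2 : ℕ) : ℤ))))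
          = ∑ i : Fin (ℓ ^ n).totient,
            (Ideal.Quotient.mkₐ A (Ideal.span {cyclotomicLaurent A ℓ n})).toLinearMap
              (cv i • T (-(((ℓ ^ n).totient / 2 : ℕ) : ℤ) + (i : ℕ))) :=
            Finset.sum_congr rfl fun i _ => (h1 i).symm
        _ = (Ideal.Quotient.mkₐ A (Ideal.span {cyclotomicLaurent A ℓ n})).toLinearMap
            (∑ i : Fin (ℓ ^ n).totient,
              cv i • T (-(((ℓ ^ n).totient / 2 : ℕ) : ℤ) + (i : ℕ))) := (map_sum _ _ _).symm
        _ = 0 := by rw [hcv, hmkₐ, hx0]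
    have hsum2 : (∑ i : Fin (ℓ ^ n).totient, cv i • B i)
        * Ideal.Quotient.mk (Ideal.span {cyclotomicLaurent A ℓ n})
          (T (-(((ℓ ^ n).totient / 2 : ℕ) : ℤ))) = 0 := by
      rw [Finset.sum_mul, ← hsum]
      exact Finset.sum_congr rfl fun i _ => smul_mul_assoc _ _ _
    obtain ⟨ua, hua⟩ := hTu (-(((ℓ ^ n).totient / 2 : ℕ) : ℤ))
    have hsum3 : ∑ i : Fin (ℓ ^ n).totient, cv i • B i = 0 := by
      calc ∑ i : Fin (ℓ ^ n).totient, cv i • B i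
          = ((∑ i : Fin (ℓ ^ n).totient, cv i • B i) * ↑ua) * ↑ua⁻¹ := by
            rw [mul_assoc, Units.mul_inv, mul_one]
        _ = 0 := by rw [hua, hsum2, zero_mul]
    have hcv0 : ∀ i, cv i = 0 :=
      Fintype.linearIndependent_iff.mp B.linearIndependent cv hsum3
    have hx00 : x = 0 := by
      rw [← hcv]
      simp [hcv0]
    refine Subtype.ext ?_
    show y = 0
    rw [← hxy', hx00, zero_mul]
  · -- surjectivity
    rw [← LinearMap.range_eq_top, LinearMap.range_comp, Submodule.range_subtype]
    show Submodule.map _ (cyclotomicD A ℓ n) = ⊤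
    rw [cyclotomicD, ← Submodule.map_comp, cyclBoxEq, Submodule.map_span, ← Set.range_comp]
    have hgen : ((Ideal.Quotient.mkₐ A (Ideal.span {cyclotomicLaurent A ℓ n})).toLinearMap ∘ₗ
          LinearMap.mulRight A (cyclotomicFactor A ℓ n)) ∘
          (fun i : Fin (ℓ ^ n).totient =>
            (T (-(((ℓ ^ n).totient / 2 : ℕ) : ℤ) + (i : ℕ)) : LaurentPolynomial A))
        = fun i : Fin (ℓ ^ n).totient => B i * ↑w := by
      funext i
      rw [Function.comp_apply, LinearMap.comp_apply, LinearMap.mulRight_apply, hmkₐ,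
        hw, map_mul, T_add, map_mul, hB i]
      ring
    rw [hgen]
    have himg : (Set.range fun i : Fin (ℓ ^ n).totient => B i * ↑w)
        = (LinearMap.mulRight A (↑w : LaurentPolynomial A ⧸ Ideal.span {cyclotomicLaurent A ℓ n}))
          '' Set.range B := by
      rw [← Set.range_comp]
      rfl
    rw [himg, ← Submodule.map_span, B.span_eq, Submodule.map_top, LinearMap.range_eq_top]
    intro z
    exact ⟨z * ↑w⁻¹, by
      rw [LinearMap.mulRight_apply, mul_assoc, Units.inv_mul, mul_one]⟩
end

section
/- Let ℓ be a prime number and A a commutative ring in which ℓ is invertible. The A-algebra homomorphism c : A[z^{±1}] → ∏_{n ≥ 0} A[z^{±1}]/(Φ_{ℓⁿ}), whose n-th component is the quotient map modulo the ideal generated by the ℓⁿ-th cyclotomic polynomial Φ_{ℓⁿ}, is injective. -/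
open LaurentPolynomial

/-- The `A`-algebra homomorphism `c : A[z^{±1}] → ∏_{n ≥ 0} A[z^{±1}]/(Φ_{ℓⁿ})` whose `n`-th
component is reduction modulo the ideal generated by `Φ_{ℓⁿ}`. -/
noncomputable def cyclotomicRestriction (A : Type*) [CommRing A] (ℓ : ℕ) :
    LaurentPolynomial A →+* ∀ n : ℕ, LaurentPolynomial A ⧸ Ideal.span {cyclotomicLaurent A ℓ n} :=
  Pi.ringHom fun n => Ideal.Quotient.mk (Ideal.span {cyclotomicLaurent A ℓ n})

/-- A polynomial whose constant coefficient is a unit is coprime to `X`. -/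
lemma isCoprime_X_of_isUnit_coeff_zero {A : Type*} [CommRing A] {p : Polynomial A}
    (h : IsUnit (p.coeff 0)) : IsCoprime p (Polynomial.X : Polynomial A) := by
  obtain ⟨u, hu⟩ := h
  refine ⟨Polynomial.C ((u⁻¹ : Aˣ) : A), -Polynomial.C ((u⁻¹ : Aˣ) : A) * p.divX, ?_⟩
  have h1 := Polynomial.X_mul_divX_add p
  have h2 : p - Polynomial.X * p.divX = Polynomial.C (p.coeff 0) := by
    linear_combination -h1
  calc Polynomial.C ((u⁻¹ : Aˣ) : A) * p
        + -Polynomial.C ((u⁻¹ : Aˣ) : A) * p.divX * Polynomial.X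
      = Polynomial.C ((u⁻¹ : Aˣ) : A) *
          (p - Polynomial.X * p.divX) := by ring
    _ = 1 := by
        rw [h2, ← hu, ← Polynomial.C_mul]
        simp

/-- The constant coefficient of `Φ_{ℓⁿ}` is a unit. -/
lemma isUnit_cyclotomic_coeff_zero {A : Type*} [CommRing A] {ℓ : ℕ}
    (hℓ : Nat.Prime ℓ) (n : ℕ) :
    IsUnit ((Polynomial.cyclotomic (ℓ ^ n) A).coeff 0) := by
  rcases Nat.eq_zero_or_pos n with rfl | hn
  · simp [Polynomial.cyclotomic_one]
  · rw [Polynomial.cyclotomic_coeff_zero A (Nat.one_lt_pow hn.ne' hℓ.one_lt)]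
    exact isUnit_one

/-- Divisibility of Laurent polynomials implies divisibility of polynomials up to
a power of `X`. -/
lemma dvd_X_pow_mul_of_toLaurent_dvd {A : Type*} [CommRing A] {a b : Polynomial A}
    (h : Polynomial.toLaurent a ∣ Polynomial.toLaurent b) :
    ∃ k : ℕ, a ∣ Polynomial.X ^ k * b := by
  obtain ⟨g, hg⟩ := h
  obtain ⟨m, q, hq⟩ := g.exists_T_pow
  refine ⟨m, q, Polynomial.toLaurent_injective ?_⟩
  rw [map_mul, map_mul, Polynomial.toLaurent_X_pow, hq, hg]
  ring

/-- A monic divisor of a nonzero polynomial has degree at most that of the polynomial. -/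
lemma monic_natDegree_le_of_dvd {A : Type*} [CommRing A] {a b : Polynomial A}
    (ha : a.Monic) (hab : a ∣ b) (hb : b ≠ 0) : a.natDegree ≤ b.natDegree := by
  obtain ⟨r, rfl⟩ := hab
  have hr : r ≠ 0 := by
    rintro rfl
    exact hb (mul_zero a)
  rw [ha.natDegree_mul' hr]
  exact Nat.le_add_right _ _

/-- For a prime `ℓ` invertible in the commutative ring `A`, the homomorphism
`c : A[z^{±1}] → ∏_{n ≥ 0} A[z^{±1}]/(Φ_{ℓⁿ})` is injective. -/
theorem cyclotomicRestriction_injective {A : Type*} [CommRing A] {ℓ : ℕ}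
    (hℓ : Nat.Prime ℓ) (hunit : IsUnit (ℓ : A)) :
    Function.Injective (cyclotomicRestriction A ℓ) := by
  rw [injective_iff_map_eq_zero]
  intro f hf
  -- each Φ_{ℓⁿ} divides f in the Laurent ring
  have hdvdL : ∀ n : ℕ, cyclotomicLaurent A ℓ n ∣ f := by
    intro n
    have h0 : Ideal.Quotient.mk (Ideal.span {cyclotomicLaurent A ℓ n}) f = 0 := congrFun hf n
    exact Ideal.mem_span_singleton.mp (Ideal.Quotient.eq_zero_iff_mem.mp h0)
  -- write f = toLaurent p * T(-d)
  obtain ⟨d, p, hp⟩ := f.exists_T_pow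
  -- each cyclotomic divides p in A[X]
  have hdvdP : ∀ n : ℕ, Polynomial.cyclotomic (ℓ ^ n) A ∣ p := by
    intro n
    have h1 : cyclotomicLaurent A ℓ n ∣ Polynomial.toLaurent p := by
      rw [hp]
      exact Dvd.dvd.mul_right (hdvdL n) _
    obtain ⟨k, hk⟩ := dvd_X_pow_mul_of_toLaurent_dvd h1
    have hco : IsCoprime (Polynomial.cyclotomic (ℓ ^ n) A) ((Polynomial.X : Polynomial A) ^ k) :=
      (isCoprime_X_of_isUnit_coeff_zero (isUnit_cyclotomic_coeff_zero hℓ n)).pow_right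
    exact hco.dvd_of_dvd_mul_left hk
  rcases subsingleton_or_nontrivial A with hs | hn
  · exact Subsingleton.elim f 0
  -- p must be zero by a degree argument
  have hp0 : p = 0 := by
    by_contra hne
    have hdeg : ∀ n : ℕ, (ℓ ^ n).totient ≤ p.natDegree := by
      intro n
      have := monic_natDegree_le_of_dvd (Polynomial.cyclotomic.monic _ A) (hdvdP n) hne
      rwa [Polynomial.natDegree_cyclotomic] at this
    set D := p.natDegree with hD
    have h1 : (ℓ ^ (D + 1)).totient ≤ D := hdeg (D + 1)
    have h2 : ℓ ^ D ≤ (ℓ ^ (D + 1)).totient := by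
      rw [Nat.totient_prime_pow hℓ (Nat.succ_pos D)]
      rw [Nat.succ_sub_one]
      calc ℓ ^ D = ℓ ^ D * 1 := (mul_one _).symm
        _ ≤ ℓ ^ D * (ℓ - 1) :=
          Nat.mul_le_mul_left _ (by have := hℓ.two_le; omega)
    have h3 : D < ℓ ^ D := Nat.lt_pow_self hℓ.one_lt
    exact Nat.lt_irrefl D (lt_of_lt_of_le h3 (le_trans h2 h1))
  have hz : f * T (d : ℤ) = 0 := by rw [← hp, hp0, map_zero]
  have hT : IsUnit (T (d : ℤ) : LaurentPolynomial A) := isUnit_T _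
  exact hT.mul_left_eq_zero.mp hz
end

section
/- Let ℓ be a prime number and let A → B be an injective homomorphism of commutative rings in which ℓ is invertible. Then a Laurent polynomial Q ∈ B[z^{±1}] lies in the image of the induced map A[z^{±1}] → B[z^{±1}] (i.e., has all its coefficients in A) if and only if, for every n ≥ 0, the class of Q in B[z^{±1}]/(Φ_{ℓⁿ}) lies in the image of the induced map A[z^{±1}]/(Φ_{ℓⁿ}) → B[z^{±1}]/(Φ_{ℓⁿ}). In other words, the commutative square formed by the maps c_A : A[z^{±1}] → ∏_{n≥0} A[z^{±1}]/(Φ_{ℓⁿ}), c_B : B[z^{±1}] → ∏_{n≥0} B[z^{±1}]/(Φ_{ℓⁿ}) and the maps induced by A → B is cartesian. -/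
open LaurentPolynomial

/-- The ring homomorphism `A[z^{±1}] → B[z^{±1}]` induced on Laurent polynomials by a ring
homomorphism `f : A → B` (applying `f` to each coefficient). -/
noncomputable def laurentMapCoeff {A B : Type*} [CommRing A] [CommRing B] (f : A →+* B) :
    LaurentPolynomial A →+* LaurentPolynomial B :=
  AddMonoidAlgebra.liftNCRingHom (AddMonoidAlgebra.singleZeroRingHom.comp f)
    (AddMonoidAlgebra.of B ℤ) fun _ _ => Commute.all _ _

lemma laurentMapCoeff_single {A B : Type*} [CommRing A] [CommRing B] (f : A →+* B)
    (n : ℤ) (a : A) :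
    laurentMapCoeff f (AddMonoidAlgebra.single n a) = AddMonoidAlgebra.single n (f a) := by
  have h1 : laurentMapCoeff f (AddMonoidAlgebra.single n a)
      = AddMonoidAlgebra.singleZeroRingHom (f a)
        * AddMonoidAlgebra.of B ℤ (Multiplicative.ofAdd n) :=
    AddMonoidAlgebra.liftNC_single _ _ _ _
  rw [h1]
  exact (single_eq_C_mul_T (f a) n).symm

lemma laurentMapCoeff_T {A B : Type*} [CommRing A] [CommRing B] (f : A →+* B) (n : ℤ) :
    laurentMapCoeff f (T n) = T n := by
  show laurentMapCoeff f (AddMonoidAlgebra.single n 1) = AddMonoidAlgebra.single n 1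
  rw [laurentMapCoeff_single, map_one]

lemma laurentMapCoeff_toLaurent {A B : Type*} [CommRing A] [CommRing B] (f : A →+* B)
    (p : Polynomial A) :
    laurentMapCoeff f (Polynomial.toLaurent p) = Polynomial.toLaurent (p.map f) := by
  induction p using Polynomial.induction_on' with
  | add p q hp hq => simp only [Polynomial.map_add, map_add, hp, hq]
  | monomial n a =>
      rw [Polynomial.map_monomial, Polynomial.toLaurent_C_mul_T, Polynomial.toLaurent_C_mul_T,
        ← single_eq_C_mul_T, ← single_eq_C_mul_T, laurentMapCoeff_single]

/-- Reduction of a Laurent polynomial modulo a monic polynomial with unit constant term to a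
polynomial representative of small degree. -/
lemma laurent_reduce_mod {A : Type*} [CommRing A] [Nontrivial A] {Φ : Polynomial A} (hm : Φ.Monic)
    (hu : IsUnit (Φ.coeff 0)) (P : LaurentPolynomial A) :
    ∃ r : Polynomial A, r.degree < Φ.degree ∧
      Polynomial.toLaurent Φ ∣ (P - Polynomial.toLaurent r) := by
  classical
  obtain ⟨e, p, hp⟩ := P.exists_T_pow
  obtain ⟨u, huu⟩ := hu
  set v : A := ((u⁻¹ : Aˣ) : A) with hv
  set h : Polynomial A := -(Polynomial.C v * Φ.divX) with hh
  have hvu : v * Φ.coeff 0 = 1 := by rw [← huu, hv]; exact_mod_cast u.inv_mul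
  have h1 := Polynomial.divX_mul_X_add Φ
  have h2 : Polynomial.C v * Polynomial.C (Φ.coeff 0) = 1 := by
    rw [← Polynomial.C_mul, hvu, map_one]
  have hx : Polynomial.X * (-(Polynomial.C v * Φ.divX)) - 1 = -(Polynomial.C v * Φ) := by
    linear_combination (-(Polynomial.C v)) * h1 + h2
  have key : Polynomial.toLaurent Φ ∣ (T 1 * Polynomial.toLaurent h - 1) := by
    refine ⟨-Polynomial.toLaurent (Polynomial.C v), ?_⟩
    rw [hh, map_neg, map_mul]
    have h4 := congrArg Polynomial.toLaurent hx
    rw [map_sub, map_mul, map_one, Polynomial.toLaurent_X, map_neg, map_mul, map_neg,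
      map_mul] at h4
    linear_combination h4
  have t2 : (T (-1) : LaurentPolynomial A) * T 1 = 1 := by
    rw [← T_add]; norm_num
  obtain ⟨c, hc⟩ := key
  have key1 : Polynomial.toLaurent Φ ∣ (T (-1) - Polynomial.toLaurent h) :=
    ⟨-(T (-1) * c), by
      linear_combination (-(T (-1) : LaurentPolynomial A)) * hc
        + Polynomial.toLaurent h * t2⟩
  have key2 : ∀ k : ℕ, Polynomial.toLaurent Φ ∣
      (T (-(k : ℤ)) - Polynomial.toLaurent (h ^ k)) := by
    intro k
    induction k with
    | zero => simp
    | succ k ih =>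
        have hc2 : (-((k + 1 : ℕ) : ℤ)) = -(k : ℤ) + -1 := by push_cast; ring
        rw [hc2, T_add, pow_succ, map_mul]
        exact dvd_mul_sub_mul ih key1
  have hPp : P = Polynomial.toLaurent p * T (-(e : ℤ)) := by
    have hz : ((e : ℤ) + -(e : ℤ)) = 0 := by ring
    rw [hp, mul_T_assoc, hz, T_zero, mul_one]
  set g : Polynomial A := p * h ^ e with hg
  refine ⟨g %ₘ Φ, Polynomial.degree_modByMonic_lt g hm, ?_⟩
  have d1 : Polynomial.toLaurent Φ ∣ (P - Polynomial.toLaurent g) := by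
    have heq : P - Polynomial.toLaurent g
        = Polynomial.toLaurent p * (T (-(e : ℤ)) - Polynomial.toLaurent (h ^ e)) := by
      rw [hPp, hg, map_mul]; ring
    rw [heq]
    exact (key2 e).mul_left _
  have d2 : Polynomial.toLaurent Φ ∣
      (Polynomial.toLaurent g - Polynomial.toLaurent (g %ₘ Φ)) := by
    refine ⟨Polynomial.toLaurent (g /ₘ Φ), ?_⟩
    have h3 := Polynomial.modByMonic_add_div g Φ
    have h5 : g - g %ₘ Φ = Φ * (g /ₘ Φ) := by linear_combination -h3
    rw [← map_sub, h5, map_mul]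
  have hsplit : P - Polynomial.toLaurent (g %ₘ Φ)
      = (P - Polynomial.toLaurent g)
        + (Polynomial.toLaurent g - Polynomial.toLaurent (g %ₘ Φ)) := by ring
  rw [hsplit]
  exact dvd_add d1 d2

/-- Lemma 2.2.5(2): for a prime `ℓ` invertible in `A` and `B` and an injective ring
homomorphism `A → B`, a Laurent polynomial `Q ∈ B[z^{±1}]` has all its coefficients in `A`
(i.e. lies in the image of `A[z^{±1}] → B[z^{±1}]`) if and only if for every `n ≥ 0` its class
modulo `Φ_{ℓⁿ}` lies in the image of the induced map
`A[z^{±1}]/(Φ_{ℓⁿ}) → B[z^{±1}]/(Φ_{ℓⁿ})`; that is, the square formed by `c_A`, `c_B` and the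
maps induced by `A → B` is cartesian. -/
theorem laurent_cartesian_square {A B : Type*} [CommRing A] [CommRing B] {ℓ : ℕ}
    (hℓ : Nat.Prime ℓ) (hunitA : IsUnit (ℓ : A)) (hunitB : IsUnit (ℓ : B))
    (f : A →+* B) (hf : Function.Injective f) (Q : LaurentPolynomial B) :
    Q ∈ Set.range (laurentMapCoeff f) ↔
      ∀ n : ℕ, Ideal.Quotient.mk (Ideal.span {cyclotomicLaurent B ℓ n}) Q ∈
        Set.range ((Ideal.Quotient.mk (Ideal.span {cyclotomicLaurent B ℓ n})).comp
          (laurentMapCoeff f)) := by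
  constructor
  · rintro ⟨P, rfl⟩ n
    exact ⟨P, rfl⟩
  · intro h
    rcases subsingleton_or_nontrivial B with hB | hB
    · refine ⟨0, ?_⟩
      apply LaurentPolynomial.ext
      intro a
      exact Subsingleton.elim _ _
    haveI : Nontrivial A := f.domain_nontrivial
    obtain ⟨d, q, hq⟩ := Q.exists_T_pow
    set n : ℕ := q.natDegree + 1 with hn
    set D : ℕ := (ℓ ^ n).totient with hDdef
    have hℓn2 : 1 < ℓ ^ n := Nat.one_lt_pow (by omega) hℓ.one_lt
    have hD : q.natDegree < D := by
      have htot : D = ℓ ^ q.natDegree * (ℓ - 1) := by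
        have hn1 : n - 1 = q.natDegree := by omega
        rw [hDdef, Nat.totient_prime_pow hℓ (by omega), hn1]
      have h2 : q.natDegree < 2 ^ q.natDegree := Nat.lt_two_pow_self
      have h3 : 2 ^ q.natDegree ≤ ℓ ^ q.natDegree := Nat.pow_le_pow_left hℓ.two_le _
      have h4 : 1 ≤ ℓ - 1 := by have := hℓ.two_le; omega
      have h5 : ℓ ^ q.natDegree ≤ ℓ ^ q.natDegree * (ℓ - 1) :=
        Nat.le_mul_of_pos_right _ h4
      omega
    have hDpos : 0 < D := lt_of_le_of_lt (Nat.zero_le _) hD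
    obtain ⟨P, hP⟩ := h n
    rw [RingHom.comp_apply] at hP
    have hPQ : cyclotomicLaurent B ℓ n ∣ (Q - laurentMapCoeff f P) :=
      Ideal.mem_span_singleton.mp (Ideal.Quotient.eq.mp hP.symm)
    -- reduce P * T d modulo the cyclotomic polynomial over A
    have hmA : (Polynomial.cyclotomic (ℓ ^ n) A).Monic := Polynomial.cyclotomic.monic _ _
    have huA : IsUnit ((Polynomial.cyclotomic (ℓ ^ n) A).coeff 0) := by
      rw [Polynomial.cyclotomic_coeff_zero A hℓn2]
      exact isUnit_one
    obtain ⟨r, hrdeg, hrdvd⟩ := laurent_reduce_mod hmA huA (P * T (d : ℤ))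
    have hDA : (Polynomial.cyclotomic (ℓ ^ n) A).natDegree = D :=
      Polynomial.natDegree_cyclotomic _ _
    have hDB : (Polynomial.cyclotomic (ℓ ^ n) B).natDegree = D :=
      Polynomial.natDegree_cyclotomic _ _
    have hrD : r.natDegree < D := by
      by_cases hr0 : r = 0
      · rw [hr0, Polynomial.natDegree_zero]; exact hDpos
      · rw [← hDA]
        exact Polynomial.natDegree_lt_natDegree hr0 hrdeg
    -- push the reduction to B
    have hrd : cyclotomicLaurent B ℓ n ∣
        (laurentMapCoeff f (P * T (d : ℤ)) - Polynomial.toLaurent (r.map f)) := by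
      obtain ⟨c, hc⟩ := hrdvd
      refine ⟨laurentMapCoeff f c, ?_⟩
      calc laurentMapCoeff f (P * T (d : ℤ)) - Polynomial.toLaurent (r.map f)
          = laurentMapCoeff f (P * T (d : ℤ) - Polynomial.toLaurent r) := by
            rw [map_sub, laurentMapCoeff_toLaurent]
        _ = laurentMapCoeff f (Polynomial.toLaurent (Polynomial.cyclotomic (ℓ ^ n) A) * c) := by
            rw [hc]
        _ = cyclotomicLaurent B ℓ n * laurentMapCoeff f c := by
            rw [map_mul, laurentMapCoeff_toLaurent, Polynomial.map_cyclotomic]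
            rfl
    have hq' : cyclotomicLaurent B ℓ n ∣
        (Polynomial.toLaurent q - Polynomial.toLaurent (r.map f)) := by
      have e1 : Polynomial.toLaurent q - Polynomial.toLaurent (r.map f)
          = (Q - laurentMapCoeff f P) * T (d : ℤ)
            + (laurentMapCoeff f (P * T (d : ℤ)) - Polynomial.toLaurent (r.map f)) := by
        rw [map_mul, laurentMapCoeff_T, hq]; ring
      rw [e1]
      exact dvd_add (hPQ.mul_right _) hrd
    obtain ⟨S, hS⟩ := hq'
    obtain ⟨e, s, hs⟩ := S.exists_T_pow
    have hws : (q - r.map f) * Polynomial.X ^ e = Polynomial.cyclotomic (ℓ ^ n) B * s := by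
      apply Polynomial.toLaurent_injective
      rw [map_mul, map_mul, Polynomial.toLaurent_X_pow, map_sub, hS, mul_assoc, ← hs]
      rfl
    set w : Polynomial B := q - r.map f with hwdef
    have hw0 : w = 0 := by
      by_contra hwne
      have hsne : s ≠ 0 := by
        rintro rfl
        rw [mul_zero] at hws
        apply hwne
        ext k
        have hck := congrArg (fun p => Polynomial.coeff p (k + e)) hws
        simpa [Polynomial.coeff_mul_X_pow] using hck
      have hwd : w.natDegree < D := by
        refine lt_of_le_of_lt (Polynomial.natDegree_sub_le _ _) (max_lt hD ?_)
        exact lt_of_le_of_lt Polynomial.natDegree_map_le hrD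
      have l1 : (w * Polynomial.X ^ e).natDegree = w.natDegree + e := by
        rw [Polynomial.natDegree_mul', Polynomial.natDegree_X_pow]
        rw [Polynomial.leadingCoeff_X_pow, mul_one]
        exact Polynomial.leadingCoeff_ne_zero.mpr hwne
      have l2 : (Polynomial.cyclotomic (ℓ ^ n) B * s).natDegree = D + s.natDegree := by
        rw [Polynomial.natDegree_mul', hDB]
        rw [(Polynomial.cyclotomic.monic _ _).leadingCoeff, one_mul]
        exact Polynomial.leadingCoeff_ne_zero.mpr hsne
      have h1 : w.natDegree + e = D + s.natDegree := by rw [← l1, hws, l2]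
      have hts : s.natTrailingDegree < e :=
        lt_of_le_of_lt s.natTrailingDegree_le_natDegree (by omega)
      have c1 : (w * Polynomial.X ^ e).coeff s.natTrailingDegree = 0 := by
        rw [Polynomial.coeff_mul_X_pow', if_neg (by omega)]
      have c2 : (Polynomial.cyclotomic (ℓ ^ n) B * s).coeff s.natTrailingDegree
          = (Polynomial.cyclotomic (ℓ ^ n) B).coeff 0 * s.coeff s.natTrailingDegree := by
        rw [Polynomial.coeff_mul]
        refine Finset.sum_eq_single (0, s.natTrailingDegree) ?_ ?_
        · rintro ⟨i, j⟩ hmem hne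
          rw [Finset.HasAntidiagonal.mem_antidiagonal] at hmem
          have hj : j < s.natTrailingDegree := by
            rcases Nat.lt_or_ge j s.natTrailingDegree with hlt | hge
            · exact hlt
            · exfalso
              apply hne
              have hj' : j = s.natTrailingDegree := by omega
              have hi' : i = 0 := by omega
              rw [hi', hj']
          rw [Polynomial.coeff_eq_zero_of_lt_natTrailingDegree hj, mul_zero]
        · intro hnot
          exact absurd (Finset.HasAntidiagonal.mem_antidiagonal.mpr (zero_add _)) hnot
      rw [hws, c2, Polynomial.cyclotomic_coeff_zero B hℓn2, one_mul] at c1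
      exact hsne (Polynomial.trailingCoeff_eq_zero.mp c1)
    have hqr : q = r.map f := sub_eq_zero.mp hw0
    refine ⟨Polynomial.toLaurent r * T (-(d : ℤ)), ?_⟩
    have hz : ((d : ℤ) + -(d : ℤ)) = 0 := by ring
    rw [map_mul, laurentMapCoeff_toLaurent, ← hqr, laurentMapCoeff_T, hq, mul_T_assoc,
      hz, T_zero, mul_one]
end

section
/- Let A be a commutative R-algebra and let (A_i)_{i ∈ I} be a family of commutative A-algebras such that the natural ring homomorphism A → ∏_{i ∈ I} A_i is injective. Then the natural map F(A) → ∏_{i ∈ I} F(A_i), given componentwise by base change along A → A_i, is bijective. In particular, a compatible family of Hopf algebra homomorphisms f_i : A_i ⊗_R C → A_i[z^{±1}] extending the u_n descends uniquely to a Hopf algebra homomorphism f : A ⊗_R C → A[z^{±1}] extending the u_n. -/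
open LaurentPolynomial TensorProduct

noncomputable section

/-- The comultiplication of the group Hopf algebra `B[G]` (each group element is grouplike),
as a `B`-algebra homomorphism `B[G] → B[G] ⊗[B] B[G]`. -/
def groupAlgComul (B : Type*) [CommRing B] (G : Type*) [AddCommMonoid G] :
    AddMonoidAlgebra B G →ₐ[B] AddMonoidAlgebra B G ⊗[B] AddMonoidAlgebra B G :=
  AddMonoidAlgebra.lift B _ G
    { toFun := fun g => AddMonoidAlgebra.of B G g ⊗ₜ[B] AddMonoidAlgebra.of B G g
      map_one' := by
        simp only [map_one, Algebra.TensorProduct.one_def]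
      map_mul' := fun x y => by
        simp only [map_mul, Algebra.TensorProduct.tmul_mul_tmul] }

/-- The counit of the group Hopf algebra `B[G]`, as a `B`-algebra homomorphism `B[G] → B`. -/
def groupAlgCounit (B : Type*) [CommRing B] (G : Type*) [AddCommMonoid G] :
    AddMonoidAlgebra B G →ₐ[B] B :=
  AddMonoidAlgebra.lift B B G 1

/-- The homomorphism `A[G] → B[G]` of group algebras induced by an `R`-algebra homomorphism
`φ : A → B` on coefficients. -/
def groupAlgMapCoeff {R A B : Type*} [CommRing R] [CommRing A] [CommRing B]
    [Algebra R A] [Algebra R B] (G : Type*) [AddCommMonoid G] (φ : A →ₐ[R] B) :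
    AddMonoidAlgebra A G →ₐ[R] AddMonoidAlgebra B G :=
  AddMonoidAlgebra.liftNCAlgHom (AddMonoidAlgebra.singleZeroAlgHom.comp φ)
    (AddMonoidAlgebra.of B G) fun _ _ => Commute.all _ _

/-- The reduction map `A[z^{±1}] → A[z]/(z^N - 1)`, realized as the `A`-algebra homomorphism
from the group algebra of `ℤ` to the group algebra of `ℤ/Nℤ` induced by the canonical
projection `ℤ → ℤ/Nℤ`. -/
def laurentToCyclic (A : Type*) [CommRing A] (N : ℕ) :
    LaurentPolynomial A →ₐ[A] AddMonoidAlgebra A (ZMod N) :=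
  AddMonoidAlgebra.lift A _ ℤ
    ((AddMonoidAlgebra.of A (ZMod N)).comp
      (AddMonoidHom.toMultiplicative (Int.castAddHom (ZMod N))))

/-- The projection `A[z]/(z^N - 1) → A[z]/(z^M - 1)` (for `M ∣ N`) sending `z` to `z`,
realized as the map of group algebras induced by `ℤ/Nℤ → ℤ/Mℤ`. -/
def cyclicProj (A : Type*) [CommRing A] {M N : ℕ} (h : M ∣ N) :
    AddMonoidAlgebra A (ZMod N) →ₐ[A] AddMonoidAlgebra A (ZMod M) :=
  AddMonoidAlgebra.lift A _ (ZMod N)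
    ((AddMonoidAlgebra.of A (ZMod M)).comp
      (AddMonoidHom.toMultiplicative (ZMod.castHom h (ZMod M)).toAddMonoidHom))

/-- The `R`-algebra homomorphism `C ⊗[R] C → A[G] ⊗[A] A[G]` induced by
`g : C → A[G]` on each factor. -/
def tensorSquare {R : Type*} [CommRing R] {C : Type*} [CommRing C] [Algebra R C]
    {A : Type*} [CommRing A] [Algebra R A] {G : Type*} [AddCommMonoid G]
    (g : C →ₐ[R] AddMonoidAlgebra A G) :
    C ⊗[R] C →ₐ[R] AddMonoidAlgebra A G ⊗[A] AddMonoidAlgebra A G :=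
  Algebra.TensorProduct.lift
    ((Algebra.TensorProduct.includeLeft :
        AddMonoidAlgebra A G →ₐ[R] AddMonoidAlgebra A G ⊗[A] AddMonoidAlgebra A G).comp g)
    (((Algebra.TensorProduct.includeRight :
        AddMonoidAlgebra A G →ₐ[A] AddMonoidAlgebra A G ⊗[A] AddMonoidAlgebra A G).restrictScalars
          R).comp g)
    fun _ _ => Commute.all _ _

/-- An `R`-algebra homomorphism `g : C → A[G]` from an `R`-Hopf algebra `C` to the group
algebra `A[G]` over an `R`-algebra `A` is a homomorphism of Hopf algebras (equivalently, the
induced `A`-algebra homomorphism `A ⊗_R C → A[G]` is a homomorphism of Hopf algebras over `A`)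
if it is compatible with the comultiplications and the counits. -/
def IsHopfAlgHomToGroupAlg {R : Type*} [CommRing R] {C : Type*} [CommRing C]
    [HopfAlgebra R C] {A : Type*} [CommRing A] [Algebra R A] {G : Type*} [AddCommMonoid G]
    (g : C →ₐ[R] AddMonoidAlgebra A G) : Prop :=
  ((groupAlgComul A G).restrictScalars R).comp g =
      (tensorSquare g).comp (Bialgebra.comulAlgHom R C) ∧
    ((groupAlgCounit A G).restrictScalars R).comp g =
      (Algebra.ofId R A).comp (Bialgebra.counitAlgHom R C)

/-- The set `F(A)` of the paper (Theorem 2.1.2), in terms of restricted data: a homomorphism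
of Hopf algebras `A ⊗_R C → A[z^{±1}]` over `A` corresponds, by the universal property of
base change, to an `R`-algebra homomorphism `g : C → A[z^{±1}]` compatible with
comultiplications and counits.  The membership conditions are: `g` is a Hopf algebra
homomorphism, and for every `n ≥ 0` the composite of `g` with the reduction
`A[z^{±1}] → A[z]/(z^{ℓⁿ} - 1)` is the base change to `A` of `u_n`. -/
def laurentHopfHomSet {R : Type*} [CommRing R] {C : Type*} [CommRing C] [HopfAlgebra R C]
    (ℓ : ℕ) (u : ∀ n : ℕ, C →ₐ[R] AddMonoidAlgebra R (ZMod (ℓ ^ n)))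
    (A : Type*) [CommRing A] [Algebra R A] : Set (C →ₐ[R] LaurentPolynomial A) :=
  {g | IsHopfAlgHomToGroupAlg g ∧ ∀ n : ℕ,
    ((laurentToCyclic A (ℓ ^ n)).restrictScalars R).comp g =
      (groupAlgMapCoeff (ZMod (ℓ ^ n)) (Algebra.ofId R A)).comp (u n)}

-- ============ auxiliary lemmas ============

section Coeff

variable {R : Type*} [CommRing R] {A : Type*} [CommRing A] [Algebra R A]
  {B : Type*} [CommRing B] [Algebra R B]
  {G : Type*} [AddCommMonoid G]

theorem groupAlgMapCoeff_single (φ : A →ₐ[R] B) (g : G) (a : A) :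
    groupAlgMapCoeff G φ (AddMonoidAlgebra.single g a) = AddMonoidAlgebra.single g (φ a) := by
  classical
  rw [groupAlgMapCoeff, AddMonoidAlgebra.coe_liftNCAlgHom, AddMonoidAlgebra.liftNC_single]
  show AddMonoidAlgebra.single 0 (φ a) * AddMonoidAlgebra.single g 1 = _
  rw [AddMonoidAlgebra.single_mul_single, zero_add, mul_one]

theorem groupAlgMapCoeff_apply (φ : A →ₐ[R] B) (x : AddMonoidAlgebra A G) (g : G) :
    (groupAlgMapCoeff G φ x).coeff g = φ (x.coeff g) := by
  classical
  induction x using AddMonoidAlgebra.induction with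
  | zero => simp
  | single_add a b f _ _ ih =>
      rw [map_add]
      rw [AddMonoidAlgebra.coeff_add, AddMonoidAlgebra.coeff_add, Finsupp.add_apply,
        Finsupp.add_apply, groupAlgMapCoeff_single, AddMonoidAlgebra.coeff_single,
        AddMonoidAlgebra.coeff_single, Finsupp.single_apply, Finsupp.single_apply]
      rw [ih]
      by_cases h : a = g <;> simp [h]

theorem laurentToCyclic_eq_mapDomain (N : ℕ) (x : LaurentPolynomial A) :
    (laurentToCyclic A N x).coeff = Finsupp.mapDomain (fun k : ℤ => (k : ZMod N)) x.coeff := by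
  classical
  induction x using AddMonoidAlgebra.induction with
  | zero => simp
  | single_add a b f _ _ ih =>
      rw [map_add, AddMonoidAlgebra.coeff_add, AddMonoidAlgebra.coeff_add, ih,
        Finsupp.mapDomain_add]
      congr 1
      rw [laurentToCyclic, AddMonoidAlgebra.lift_single, AddMonoidAlgebra.coeff_single,
        Finsupp.mapDomain_single]
      show (b • (AddMonoidAlgebra.single ((a : ZMod N)) (1:A))).coeff = _
      rw [AddMonoidAlgebra.smul_single, smul_eq_mul, mul_one]; rfl

theorem cyclicProj_eq_mapDomain {M N : ℕ} (h : M ∣ N) (x : AddMonoidAlgebra A (ZMod N)) :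
    (cyclicProj A h x).coeff = Finsupp.mapDomain (ZMod.castHom h (ZMod M)) x.coeff := by
  classical
  induction x using AddMonoidAlgebra.induction with
  | zero => simp
  | single_add a b f _ _ ih =>
      rw [map_add, AddMonoidAlgebra.coeff_add, AddMonoidAlgebra.coeff_add, ih,
        Finsupp.mapDomain_add]
      congr 1
      rw [cyclicProj, AddMonoidAlgebra.lift_single, AddMonoidAlgebra.coeff_single,
        Finsupp.mapDomain_single]
      show (b • (AddMonoidAlgebra.single (ZMod.castHom h (ZMod M) a) (1:A))).coeff = _
      rw [AddMonoidAlgebra.smul_single, smul_eq_mul, mul_one]; rfl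

theorem groupAlgCounit_single (g : G) (a : A) :
    groupAlgCounit A G (AddMonoidAlgebra.single g a) = a := by
  show AddMonoidAlgebra.lift A A G 1 (AddMonoidAlgebra.single g a) = a
  rw [AddMonoidAlgebra.lift_single]
  simp

theorem groupAlgComul_single (g : G) (a : A) :
    groupAlgComul A G (AddMonoidAlgebra.single g a) =
      AddMonoidAlgebra.single g a ⊗ₜ[A] AddMonoidAlgebra.single g (1:A) := by
  rw [groupAlgComul, AddMonoidAlgebra.lift_single]
  show a • ((AddMonoidAlgebra.of A G (Multiplicative.ofAdd g)) ⊗ₜ[A]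
    (AddMonoidAlgebra.of A G (Multiplicative.ofAdd g))) = _
  rw [AddMonoidAlgebra.of_apply]
  rw [TensorProduct.smul_tmul', AddMonoidAlgebra.smul_single, smul_eq_mul, mul_one]
  rfl

end Coeff

section Transfer

variable {R : Type*} [CommRing R] {A : Type*} [CommRing A] [Algebra R A]
  {B : Type*} [CommRing B] [Algebra R B]
  {G : Type*} [AddCommMonoid G]

def tcoord (A : Type*) [CommRing A] (G : Type*) [AddCommMonoid G] :
    (AddMonoidAlgebra A G ⊗[A] AddMonoidAlgebra A G) ≃ₗ[A] (G × G →₀ A) :=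
  (TensorProduct.congr (AddMonoidAlgebra.coeffLinearEquiv A)
    (AddMonoidAlgebra.coeffLinearEquiv A)).trans (finsuppTensorFinsupp' A G G)

theorem tcoord_tmul (x y : AddMonoidAlgebra A G) (a b : G) :
    tcoord A G (x ⊗ₜ[A] y) (a, b) = x.coeff a * y.coeff b :=
  finsuppTensorFinsupp'_apply_apply A G G x.coeff y.coeff a b

theorem groupAlgMapCoeff_eq_mapRange (φ : A →ₐ[R] B) (x : AddMonoidAlgebra A G) :
    (groupAlgMapCoeff G φ x).coeff = Finsupp.mapRange φ (map_zero φ) x.coeff :=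
  Finsupp.ext fun g => by rw [groupAlgMapCoeff_apply, Finsupp.mapRange_apply]

theorem tcoord_comul_mapCoeff (φ : A →ₐ[R] B) (x : AddMonoidAlgebra A G) :
    tcoord B G (groupAlgComul B G (groupAlgMapCoeff G φ x)) =
      Finsupp.mapRange φ (map_zero φ) (tcoord A G (groupAlgComul A G x)) := by
  classical
  induction x using AddMonoidAlgebra.induction with
  | zero => simp
  | single_add a b f _ _ ih =>
      rw [map_add, map_add, map_add, map_add, map_add,
        Finsupp.mapRange_add (map_add φ), ← ih]
      congr 1
      rw [groupAlgMapCoeff_single, groupAlgComul_single, groupAlgComul_single]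
      apply Finsupp.ext; rintro ⟨p, q⟩
      rw [tcoord_tmul, Finsupp.mapRange_apply, tcoord_tmul]
      by_cases hp : a = p <;> by_cases hq : a = q <;>
        simp [AddMonoidAlgebra.coeff_single, Finsupp.single_apply, hp, hq, map_one, mul_one,
          apply_ite φ]

theorem tensorSquare_tmul {C : Type*} [CommRing C] [Algebra R C]
    (g : C →ₐ[R] AddMonoidAlgebra A G) (c d : C) :
    tensorSquare g (c ⊗ₜ[R] d) = g c ⊗ₜ[A] g d := by
  rw [tensorSquare, Algebra.TensorProduct.lift_tmul]
  show ((g c) ⊗ₜ[A] (1 : AddMonoidAlgebra A G)) * ((1 : AddMonoidAlgebra A G) ⊗ₜ[A] (g d)) = _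
  rw [Algebra.TensorProduct.tmul_mul_tmul, mul_one, one_mul]

theorem tcoord_tensorSquare {C : Type*} [CommRing C] [Algebra R C]
    (φ : A →ₐ[R] B) (g : C →ₐ[R] AddMonoidAlgebra A G) (X : C ⊗[R] C) :
    tcoord B G (tensorSquare ((groupAlgMapCoeff G φ).comp g) X) =
      Finsupp.mapRange φ (map_zero φ) (tcoord A G (tensorSquare g X)) := by
  induction X with
  | zero => simp
  | tmul c d =>
      rw [tensorSquare_tmul, tensorSquare_tmul]
      apply Finsupp.ext; rintro ⟨p, q⟩
      rw [tcoord_tmul, Finsupp.mapRange_apply, tcoord_tmul, AlgHom.comp_apply,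
        AlgHom.comp_apply, groupAlgMapCoeff_apply, groupAlgMapCoeff_apply, map_mul]
  | add X Y ihX ihY =>
      rw [map_add, map_add, map_add, map_add, Finsupp.mapRange_add (map_add φ), ihX, ihY]

theorem groupAlgCounit_mapCoeff (φ : A →ₐ[R] B) (x : AddMonoidAlgebra A G) :
    groupAlgCounit B G (groupAlgMapCoeff G φ x) = φ (groupAlgCounit A G x) := by
  classical
  induction x using AddMonoidAlgebra.induction with
  | zero => simp
  | single_add a b f _ _ ih =>
      rw [map_add, map_add, map_add, map_add φ, ih]
      congr 1
      rw [groupAlgMapCoeff_single, groupAlgCounit_single, groupAlgCounit_single]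

theorem laurentToCyclic_mapCoeff (φ : A →ₐ[R] B) (N : ℕ) (x : LaurentPolynomial A) :
    laurentToCyclic B N (groupAlgMapCoeff ℤ φ x) =
      groupAlgMapCoeff (ZMod N) φ (laurentToCyclic A N x) := by
  apply AddMonoidAlgebra.coeff_injective
  rw [laurentToCyclic_eq_mapDomain, groupAlgMapCoeff_eq_mapRange,
    groupAlgMapCoeff_eq_mapRange, laurentToCyclic_eq_mapDomain,
    Finsupp.mapDomain_mapRange _ _ _ _ (map_add φ)]

end Transfer

section Projectors

variable {R : Type*} [CommRing R] {C : Type*} [CommRing C] [HopfAlgebra R C]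
  {ℓ : ℕ} (u : ∀ n : ℕ, C →ₐ[R] AddMonoidAlgebra R (ZMod (ℓ ^ n)))

/-- The `j`-th coefficient of `u m`, as a linear functional on `C`. -/
def efun (m : ℕ) (j : ZMod (ℓ ^ m)) : C →ₗ[R] R :=
  (Finsupp.lapply j).comp ((AddMonoidAlgebra.coeffLinearEquiv R).toLinearMap.comp
    (u m).toLinearMap)

theorem efun_apply (m : ℕ) (j : ZMod (ℓ ^ m)) (c : C) : efun u m j c = (u m c).coeff j := rfl

/-- contraction against the second factor -/
def qfun (m : ℕ) (j : ZMod (ℓ ^ m)) : C ⊗[R] C →ₗ[R] C :=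
  TensorProduct.lift (((LinearMap.lsmul R C).comp (efun u m j)).flip)

theorem qfun_tmul (m : ℕ) (j : ZMod (ℓ ^ m)) (a b : C) :
    qfun u m j (a ⊗ₜ[R] b) = efun u m j b • a := rfl

/-- the `(m, j)`-component projector of `C` determined by the compatible family `u`. -/
def pfun (m : ℕ) (j : ZMod (ℓ ^ m)) : C →ₗ[R] C :=
  (qfun u m j).comp (Coalgebra.comul (R := R))

theorem pfun_apply (m : ℕ) (j : ZMod (ℓ ^ m)) (x : C) (repr : Coalgebra.Repr R x (C × C)) :
    pfun u m j x = ∑ t ∈ repr.index, efun u m j (repr.right t) • repr.left t := by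
  have : pfun u m j x = qfun u m j (Coalgebra.comul x) := rfl
  rw [this, ← repr.eq, map_sum]
  simp only [qfun_tmul]

theorem pfun_mem_span (m : ℕ) (j : ZMod (ℓ ^ m)) (x : C) (repr : Coalgebra.Repr R x (C × C)) :
    pfun u m j x ∈ Submodule.span R (repr.left '' repr.index) := by
  rw [pfun_apply u m j x repr]
  refine Submodule.sum_mem _ fun t ht => Submodule.smul_mem _ _ (Submodule.subset_span ?_)
  exact ⟨t, ht, rfl⟩

theorem u_castDown
    (hucomp : ∀ n, (cyclicProj R (pow_dvd_pow ℓ (Nat.le_succ n))).comp (u (n + 1)) = u n)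
    {m M : ℕ} (h : m ≤ M) (c : C) :
      (u m c).coeff =
        Finsupp.mapDomain (ZMod.castHom (pow_dvd_pow ℓ h) (ZMod (ℓ ^ m))) (u M c).coeff := by
  induction M with
  | zero =>
      have hm : m = 0 := Nat.le_zero.mp h
      subst hm
      rw [show (ZMod.castHom (pow_dvd_pow ℓ h) (ZMod (ℓ ^ 0))) = RingHom.id _ from
        Subsingleton.elim _ _]
      rw [show ⇑(RingHom.id (ZMod (ℓ ^ 0))) = id from rfl, Finsupp.mapDomain_id]
  | succ M ih =>
      rcases Nat.lt_or_ge m (M + 1) with hlt | hge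
      · have hmM : m ≤ M := Nat.lt_succ_iff.mp hlt
        have h1 : (u m c).coeff = Finsupp.mapDomain
            (ZMod.castHom (pow_dvd_pow ℓ hmM) (ZMod (ℓ ^ m))) (u M c).coeff := ih hmM
        have h2 : u M c = cyclicProj R (pow_dvd_pow ℓ (Nat.le_succ M)) (u (M + 1) c) := by
          rw [← hucomp M]; rfl
        rw [h1, h2, cyclicProj_eq_mapDomain, ← Finsupp.mapDomain_comp]
        apply Finsupp.mapDomain_congr
        intro x _
        show ((ZMod.castHom (pow_dvd_pow ℓ hmM) (ZMod (ℓ ^ m))).comp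
          (ZMod.castHom (pow_dvd_pow ℓ (Nat.le_succ M)) (ZMod (ℓ ^ M)))) x
            = ZMod.castHom (pow_dvd_pow ℓ h) (ZMod (ℓ ^ m)) x
        rw [ZMod.castHom_comp]
      · have hm : m = M + 1 := Nat.le_antisymm h hge
        subst hm
        rw [show (ZMod.castHom (pow_dvd_pow ℓ h) (ZMod (ℓ ^ (M+1)))) = RingHom.id _ from
          Subsingleton.elim _ _]
        rw [show ⇑(RingHom.id (ZMod (ℓ ^ (M+1)))) = id from rfl, Finsupp.mapDomain_id]

end Projectors

section Pairing

variable {R : Type*} [CommRing R] {C : Type*} [CommRing C] [HopfAlgebra R C]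
  {ℓ : ℕ} (u : ∀ n : ℕ, C →ₐ[R] AddMonoidAlgebra R (ZMod (ℓ ^ n)))

theorem efun_pairing
    (hu : ∀ n, IsHopfAlgHomToGroupAlg (u n))
    (hucomp : ∀ n, (cyclicProj R (pow_dvd_pow ℓ (Nat.le_succ n))).comp (u (n + 1)) = u n)
    {m M : ℕ} (h : m ≤ M) (j'' : ZMod (ℓ ^ M)) (j : ZMod (ℓ ^ m)) (b : C)
    (repr : Coalgebra.Repr R b (C × C)) :
    (∑ t ∈ repr.index, efun u M j'' (repr.left t) * efun u m j (repr.right t)) =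
      if ZMod.castHom (pow_dvd_pow ℓ h) (ZMod (ℓ ^ m)) j'' = j then efun u M j'' b else 0 := by
  classical
  set π := ZMod.castHom (pow_dvd_pow ℓ h) (ZMod (ℓ ^ m)) with hπ
  set e1 : AddMonoidAlgebra R (ZMod (ℓ ^ M)) →ₗ[R] R :=
    (Finsupp.lapply j'').comp (AddMonoidAlgebra.coeffLinearEquiv R).toLinearMap with he1
  set e2 : AddMonoidAlgebra R (ZMod (ℓ ^ M)) →ₗ[R] R :=
    ((Finsupp.lapply j).comp (Finsupp.lmapDomain R R π)).comp
      (AddMonoidAlgebra.coeffLinearEquiv R).toLinearMap with he2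
  set Φ : AddMonoidAlgebra R (ZMod (ℓ ^ M)) ⊗[R] AddMonoidAlgebra R (ZMod (ℓ ^ M)) →ₗ[R] R :=
    (TensorProduct.lid R R).toLinearMap.comp (TensorProduct.map e1 e2) with hΦ
  have hΦtmul : ∀ (x y : AddMonoidAlgebra R (ZMod (ℓ ^ M))),
      Φ (x ⊗ₜ[R] y) = x.coeff j'' * (Finsupp.mapDomain π y.coeff) j := by
    intro x y
    rw [hΦ, LinearMap.comp_apply, TensorProduct.map_tmul]
    show TensorProduct.lid R R (e1 x ⊗ₜ[R] e2 y) = _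
    rw [TensorProduct.lid_tmul, smul_eq_mul]
    rfl
  -- comultiplication compatibility of `u M`
  have hcomul : groupAlgComul R (ZMod (ℓ ^ M)) (u M b) =
      tensorSquare (u M) (Coalgebra.comul (R := R) b) := by
    have h1 := DFunLike.congr_fun (hu M).1 b
    simpa using h1
  have hcomul2 : groupAlgComul R (ZMod (ℓ ^ M)) (u M b) =
      ∑ t ∈ repr.index, (u M (repr.left t)) ⊗ₜ[R] (u M (repr.right t)) := by
    rw [hcomul, ← repr.eq, map_sum]
    simp only [tensorSquare_tmul]
  -- apply Φ to both sides
  have happ := congrArg Φ hcomul2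
  -- LHS : by induction on `u M b`
  have hleft : ∀ w : AddMonoidAlgebra R (ZMod (ℓ ^ M)),
      Φ (groupAlgComul R (ZMod (ℓ ^ M)) w) = if π j'' = j then w.coeff j'' else 0 := by
    intro w
    induction w using AddMonoidAlgebra.induction with
    | zero => simp
    | single_add a r f _ _ ih =>
        rw [map_add, map_add, ih, AddMonoidAlgebra.coeff_add, Finsupp.add_apply]
        rw [groupAlgComul_single, hΦtmul, AddMonoidAlgebra.coeff_single,
          AddMonoidAlgebra.coeff_single, Finsupp.mapDomain_single]
        rw [Finsupp.single_apply, Finsupp.single_apply]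
        by_cases haj : a = j''
        · subst haj
          by_cases hcond : π a = j <;> simp [hcond]
        · by_cases hcond : π a = j <;> by_cases hπaj : π j'' = j <;>
            simp [haj, hcond, hπaj]
  rw [hleft] at happ
  -- RHS : identify with the sum of products of efun's
  have hright : Φ (∑ t ∈ repr.index, (u M (repr.left t)) ⊗ₜ[R] (u M (repr.right t))) =
      ∑ t ∈ repr.index, efun u M j'' (repr.left t) * efun u m j (repr.right t) := by
    rw [map_sum]
    apply Finset.sum_congr rfl
    intro t _
    rw [hΦtmul]
    congr 1
    rw [efun_apply, u_castDown u hucomp h]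
  rw [hright] at happ
  rw [efun_apply]
  exact happ.symm

end Pairing

section Orth

variable {R : Type*} [CommRing R] {C : Type*} [CommRing C] [HopfAlgebra R C]
  {ℓ : ℕ} (u : ∀ n : ℕ, C →ₐ[R] AddMonoidAlgebra R (ZMod (ℓ ^ n)))

theorem pfun_pfun
    (hu : ∀ n, IsHopfAlgHomToGroupAlg (u n))
    (hucomp : ∀ n, (cyclicProj R (pow_dvd_pow ℓ (Nat.le_succ n))).comp (u (n + 1)) = u n)
    {m M : ℕ} (h : m ≤ M) (j : ZMod (ℓ ^ m)) (j'' : ZMod (ℓ ^ M)) (x : C) :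
    pfun u M j'' (pfun u m j x) =
      if ZMod.castHom (pow_dvd_pow ℓ h) (ZMod (ℓ ^ m)) j'' = j then pfun u M j'' x else 0 := by
  classical
  set π := ZMod.castHom (pow_dvd_pow ℓ h) (ZMod (ℓ ^ m)) with hπ
  set e1 : C →ₗ[R] R := efun u M j'' with he1
  set e2 : C →ₗ[R] R := efun u m j with he2
  -- the contraction operator Θ (x ⊗ (y ⊗ z)) = (e1 y * e2 z) • x
  set inner : C ⊗[R] C →ₗ[R] R :=
    (TensorProduct.lid R R).toLinearMap.comp (TensorProduct.map e1 e2) with hinner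
  set Θ : C ⊗[R] (C ⊗[R] C) →ₗ[R] C :=
    TensorProduct.lift (((LinearMap.lsmul R C).comp inner).flip) with hΘ
  have hΘtmul : ∀ (a y z : C), Θ (a ⊗ₜ[R] (y ⊗ₜ[R] z)) = (e1 y * e2 z) • a := by
    intro a y z
    rw [hΘ]
    show (((LinearMap.lsmul R C).comp inner).flip) a (y ⊗ₜ[R] z) = _
    show inner (y ⊗ₜ[R] z) • a = _
    rw [hinner]
    show TensorProduct.lid R R (e1 y ⊗ₜ[R] e2 z) • a = _
    rw [TensorProduct.lid_tmul, smul_eq_mul]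
  obtain repr := Coalgebra.Repr.arbitrary R x
  set a₁ : (i : repr.ι) → Coalgebra.Repr R (repr.left i) (C × C) :=
    fun i => Coalgebra.Repr.arbitrary R (repr.left i) with ha₁
  set a₂ : (i : repr.ι) → Coalgebra.Repr R (repr.right i) (C × C) :=
    fun i => Coalgebra.Repr.arbitrary R (repr.right i) with ha₂
  have key := congrArg Θ (Coalgebra.sum_tmul_tmul_eq repr a₁ a₂)
  rw [map_sum, map_sum] at key
  simp only [map_sum, hΘtmul] at key
  -- identify LHS of key with the goal's LHS
  have hL : pfun u M j'' (pfun u m j x) =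
      ∑ i ∈ repr.index, ∑ s ∈ (a₁ i).index,
        (e1 ((a₁ i).right s) * e2 (repr.right i)) • (a₁ i).left s := by
    rw [pfun_apply u m j x repr, map_sum]
    apply Finset.sum_congr rfl
    intro t _
    rw [map_smul, pfun_apply u M j'' (repr.left t) (a₁ t), Finset.smul_sum]
    apply Finset.sum_congr rfl
    intro s _
    rw [he1, he2, smul_smul, mul_comm]
  -- identify RHS of key with the if-expression
  have hR : (∑ i ∈ repr.index, ∑ s ∈ (a₂ i).index,
        (e1 ((a₂ i).left s) * e2 ((a₂ i).right s)) • repr.left i) =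
      if π j'' = j then pfun u M j'' x else 0 := by
    have : ∀ i ∈ repr.index,
        (∑ s ∈ (a₂ i).index, (e1 ((a₂ i).left s) * e2 ((a₂ i).right s)) • repr.left i) =
          (if π j'' = j then efun u M j'' (repr.right i) else 0) • repr.left i := by
      intro i _
      rw [← Finset.sum_smul]
      congr 1
      rw [he1, he2]
      exact efun_pairing u hu hucomp h j'' j (repr.right i) (a₂ i)
    rw [Finset.sum_congr rfl this]
    by_cases hcond : π j'' = j
    · simp only [hcond, if_true]
      rw [pfun_apply u M j'' x repr]
    · simp [hcond]
  rw [hL, key, hR]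

theorem counit_pfun (m : ℕ) (j : ZMod (ℓ ^ m)) (x : C) :
    Coalgebra.counit (R := R) (pfun u m j x) = efun u m j x := by
  obtain repr := Coalgebra.Repr.arbitrary R x
  rw [pfun_apply u m j x repr, map_sum]
  have hx : (∑ t ∈ repr.index, Coalgebra.counit (R := R) (repr.left t) • repr.right t) = x := by
    have h1 := Coalgebra.rTensor_counit_comul (R := R) x
    rw [← repr.eq, map_sum] at h1
    have h2 := congrArg (TensorProduct.lid R C) h1
    rw [map_sum] at h2
    simpa [LinearMap.rTensor_tmul, TensorProduct.lid_tmul] using h2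
  conv_rhs => rw [← hx]
  rw [map_sum]
  apply Finset.sum_congr rfl
  intro t _
  rw [map_smul, map_smul, smul_eq_mul, smul_eq_mul, mul_comm]

end Orth

section Finiteness

variable {R : Type*} [CommRing R] {C : Type*} [CommRing C] [HopfAlgebra R C]
  {ℓ : ℕ} (u : ∀ n : ℕ, C →ₐ[R] AddMonoidAlgebra R (ZMod (ℓ ^ n)))

theorem int_cast_ne_of_le {x y : ℤ} {m n : ℕ} (hmn : m ≤ n)
    (h : (x : ZMod (ℓ ^ m)) ≠ (y : ZMod (ℓ ^ m))) :
    (x : ZMod (ℓ ^ n)) ≠ (y : ZMod (ℓ ^ n)) := by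
  intro he
  apply h
  have := congrArg (ZMod.castHom (pow_dvd_pow ℓ hmn) (ZMod (ℓ ^ m))) he
  rwa [map_intCast, map_intCast] at this

theorem exists_sep (hl2 : 2 ≤ ℓ) {x y : ℤ} (hxy : x ≠ y) :
    ∃ m₂ : ℕ, (x : ZMod (ℓ ^ m₂)) ≠ (y : ZMod (ℓ ^ m₂)) := by
  set m₂ := (x - y).natAbs with hm₂
  refine ⟨m₂, fun he => ?_⟩
  rw [ZMod.intCast_eq_intCast_iff, Int.ModEq] at he
  have hdvd : ((ℓ ^ m₂ : ℕ) : ℤ) ∣ x - y := Int.ModEq.dvd (Int.ModEq.symm he)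
  have hne : x - y ≠ 0 := sub_ne_zero.mpr hxy
  have habs : ((ℓ ^ m₂ : ℕ) : ℤ) ≤ |x - y| := by
    apply Int.le_of_dvd (abs_pos.mpr hne)
    exact (dvd_abs _ _).mpr hdvd
  have h1 : |x - y| = (m₂ : ℤ) := by
    rw [hm₂, Int.abs_eq_natAbs]
  rw [h1] at habs
  have h2 : m₂ < 2 ^ m₂ := Nat.lt_two_pow_self
  have h3 : (2 : ℕ) ^ m₂ ≤ ℓ ^ m₂ := Nat.pow_le_pow_left hl2 m₂
  have : (ℓ ^ m₂ : ℕ) ≤ m₂ := by exact_mod_cast habs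
  omega

theorem persistent_finite [IsNoetherianRing R] (hl2 : 2 ≤ ℓ)
    (hu : ∀ n, IsHopfAlgHomToGroupAlg (u n))
    (hucomp : ∀ n, (cyclicProj R (pow_dvd_pow ℓ (Nat.le_succ n))).comp (u (n + 1)) = u n)
    (c : C) :
    {k : ℤ | ∃ m₁ : ℕ, ∀ m, m₁ ≤ m → pfun u m ((k : ZMod (ℓ ^ m))) c ≠ 0}.Finite := by
  classical
  set K := {k : ℤ | ∃ m₁ : ℕ, ∀ m, m₁ ≤ m → pfun u m ((k : ZMod (ℓ ^ m))) c ≠ 0} with hK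
  by_contra hKinf
  replace hKinf : K.Infinite := hKinf
  -- the step of the recursive extraction
  have step : ∀ S : Set ℤ, S.Infinite → S ⊆ K →
      ∃ (kk : ℤ) (nn : ℕ) (S' : Set ℤ), kk ∈ S ∧ S'.Infinite ∧ S' ⊆ S ∧
        (∀ m, nn ≤ m → pfun u m ((kk : ZMod (ℓ ^ m))) c ≠ 0) ∧
        (∀ z ∈ S', (z : ZMod (ℓ ^ nn)) ≠ (kk : ZMod (ℓ ^ nn))) := by
    intro S hSinf hSK
    obtain ⟨x, hxS⟩ := hSinf.nonempty
    obtain ⟨y, hyS, hyx⟩ : ∃ y ∈ S, y ≠ x := by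
      obtain ⟨y, hy⟩ := (hSinf.diff (Set.finite_singleton x)).nonempty
      exact ⟨y, hy.1, by simpa using hy.2⟩
    obtain ⟨m₂, hsep⟩ := exists_sep (ℓ := ℓ) hl2 hyx
    -- at least one of the complements is infinite
    have hsplit : (S \ {z | (z : ZMod (ℓ ^ m₂)) = (x : ZMod (ℓ ^ m₂))}).Infinite ∨
        (S \ {z | (z : ZMod (ℓ ^ m₂)) = (y : ZMod (ℓ ^ m₂))}).Infinite := by
      by_contra hcon
      push_neg at hcon
      apply hSinf
      have : S ⊆ (S \ {z | (z : ZMod (ℓ ^ m₂)) = (x : ZMod (ℓ ^ m₂))}) ∪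
          (S \ {z | (z : ZMod (ℓ ^ m₂)) = (y : ZMod (ℓ ^ m₂))}) := by
        intro z hz
        by_cases hzx : (z : ZMod (ℓ ^ m₂)) = (x : ZMod (ℓ ^ m₂))
        · right
          refine ⟨hz, fun hzy => hsep ?_⟩
          have h5 : (z : ZMod (ℓ ^ m₂)) = (y : ZMod (ℓ ^ m₂)) := hzy
          rw [← h5, hzx]
        · left; exact ⟨hz, hzx⟩
      exact Set.Finite.subset (hcon.1.union hcon.2) this
    -- choose the element
    obtain ⟨kk, hkkS, hinf'⟩ : ∃ kk, kk ∈ S ∧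
        (S \ {z | (z : ZMod (ℓ ^ m₂)) = (kk : ZMod (ℓ ^ m₂))}).Infinite := by
      rcases hsplit with h | h
      · exact ⟨x, hxS, h⟩
      · exact ⟨y, hyS, h⟩
    obtain ⟨m₁, hm₁⟩ := hSK hkkS
    refine ⟨kk, max m₂ m₁, S \ {z | (z : ZMod (ℓ ^ (max m₂ m₁))) = (kk : ZMod (ℓ ^ (max m₂ m₁)))},
      hkkS, ?_, Set.diff_subset, ?_, ?_⟩
    · apply hinf'.mono
      intro z hz
      refine ⟨hz.1, fun hzz => hz.2 ?_⟩
      have := congrArg (ZMod.castHom (pow_dvd_pow ℓ (le_max_left m₂ m₁)) (ZMod (ℓ ^ m₂))) hzz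
      rwa [map_intCast, map_intCast] at this
    · intro m hm
      exact hm₁ m (le_trans (le_max_right m₂ m₁) hm)
    · intro z hz
      exact hz.2
  -- build the sequence by recursion
  let T := {S : Set ℤ // S.Infinite ∧ S ⊆ K}
  let next : T → ℤ × ℕ × T := fun ⟨S, hSinf, hSK⟩ =>
    let h := step S hSinf hSK
    ⟨h.choose, h.choose_spec.choose,
      ⟨h.choose_spec.choose_spec.choose,
        h.choose_spec.choose_spec.choose_spec.2.1,
        h.choose_spec.choose_spec.choose_spec.2.2.1.trans hSK⟩⟩
  let states : ℕ → T := fun t => Nat.rec ⟨K, hKinf, le_refl K⟩ (fun _ st => (next st).2.2) t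
  let kseq : ℕ → ℤ := fun t => (next (states t)).1
  let nseq : ℕ → ℕ := fun t => (next (states t)).2.1
  -- properties of the sequence
  have hnext_spec : ∀ st : T, (next st).1 ∈ st.1 ∧
      (∀ m, (next st).2.1 ≤ m → pfun u m (((next st).1 : ZMod (ℓ ^ m))) c ≠ 0) ∧
      (∀ z ∈ (next st).2.2.1, (z : ZMod (ℓ ^ (next st).2.1)) ≠
        ((next st).1 : ZMod (ℓ ^ (next st).2.1))) ∧ (next st).2.2.1 ⊆ st.1 := by
    rintro ⟨S, hSinf, hSK⟩
    have h := step S hSinf hSK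
    exact ⟨h.choose_spec.choose_spec.choose_spec.1,
      h.choose_spec.choose_spec.choose_spec.2.2.2.1,
      h.choose_spec.choose_spec.choose_spec.2.2.2.2,
      h.choose_spec.choose_spec.choose_spec.2.2.1⟩
  have hstates_mono : ∀ t s, t ≤ s → (states s).1 ⊆ (states t).1 := by
    intro t s hts
    induction s with
    | zero => have : t = 0 := Nat.le_zero.mp hts; subst this; exact le_refl _
    | succ s ih =>
        rcases Nat.lt_or_ge t (s + 1) with hlt | hge
        · have h1 := (hnext_spec (states s)).2.2.2
          have h2 := ih (Nat.lt_succ_iff.mp hlt)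
          exact fun z hz => h2 (h1 hz)
        · have : t = s + 1 := Nat.le_antisymm hts hge
          subst this; exact le_refl _
  have hkmem : ∀ t, kseq t ∈ (states t).1 := fun t => (hnext_spec (states t)).1
  have hknonzero : ∀ t, ∀ m, nseq t ≤ m → pfun u m ((kseq t : ZMod (ℓ ^ m))) c ≠ 0 :=
    fun t => (hnext_spec (states t)).2.1
  have hsep : ∀ t s, t < s →
      ((kseq s : ZMod (ℓ ^ (nseq t))) ≠ (kseq t : ZMod (ℓ ^ (nseq t)))) := by
    intro t s hts
    have h1 : kseq s ∈ (states s).1 := hkmem s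
    have h2 : (states s).1 ⊆ (states (t + 1)).1 := hstates_mono (t + 1) s hts
    have h3 : (states (t + 1)).1 = (next (states t)).2.2.1 := rfl
    have h4 := (hnext_spec (states t)).2.2.1
    exact h4 _ (h3 ▸ h2 h1)
  -- the Noetherian module
  obtain repr := Coalgebra.Repr.arbitrary R c
  have hMfin : (repr.left '' repr.index).Finite :=
    Set.Finite.image _ (repr.index.finite_toSet)
  set Msub := Submodule.span R (repr.left '' repr.index) with hMsub
  haveI : IsNoetherian R Msub := isNoetherian_span_of_finite R hMfin
  let w : ℕ → C := fun t => pfun u (nseq t) ((kseq t : ZMod (ℓ ^ (nseq t)))) c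
  have hwmem : ∀ t, w t ∈ Msub := fun t => pfun_mem_span u _ _ c repr
  let wS : ℕ → Msub := fun t => ⟨w t, hwmem t⟩
  let V : ℕ → Submodule R Msub := fun N => Submodule.span R (Set.range (fun t : Fin (N + 1) => wS t))
  have hVmono : Monotone V := by
    intro a b hab
    apply Submodule.span_mono
    rintro _ ⟨t, rfl⟩
    exact ⟨⟨t.1, lt_of_lt_of_le t.2 (Nat.succ_le_succ hab)⟩, rfl⟩
  obtain ⟨N, hN⟩ := (monotone_stabilizes_iff_noetherian.mpr inferInstance) ⟨V, hVmono⟩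
  -- w (N+1) lies in V N
  have hmem : wS (N + 1) ∈ V N := by
    have h1 : wS (N + 1) ∈ V (N + 1) :=
      Submodule.subset_span ⟨⟨N + 1, Nat.lt_succ_self _⟩, rfl⟩
    have h2 : V N = V (N + 1) := hN (N + 1) (Nat.le_succ N)
    rwa [h2]
  rw [Submodule.mem_span_range_iff_exists_fun] at hmem
  obtain ⟨r, hr⟩ := hmem
  -- project to C
  have hrC : (∑ t : Fin (N + 1), r t • w (t : ℕ)) = w (N + 1) := by
    have := congrArg (Submodule.subtype Msub) hr
    simpa using this
  -- apply the deep projector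
  set M₀ := (Finset.range (N + 2)).sup nseq with hM₀
  have hM₀ge : ∀ t : ℕ, t ≤ N + 1 → nseq t ≤ M₀ :=
    fun t ht => Finset.le_sup (Finset.mem_range.mpr (Nat.lt_succ_of_le ht))
  set P := pfun u M₀ ((kseq (N + 1) : ZMod (ℓ ^ M₀))) with hP
  have happ := congrArg P hrC
  rw [map_sum] at happ
  -- each summand vanishes
  have hterm : ∀ t : Fin (N + 1), P (r t • w (t : ℕ)) = 0 := by
    intro t
    rw [map_smul]
    have hle : nseq (t : ℕ) ≤ M₀ := hM₀ge _ (le_trans (Nat.le_of_lt_succ t.2) (Nat.le_succ N))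
    have horth := pfun_pfun u hu hucomp hle ((kseq (t : ℕ) : ZMod (ℓ ^ (nseq (t : ℕ)))))
      ((kseq (N + 1) : ZMod (ℓ ^ M₀))) c
    have hcast : (ZMod.castHom (pow_dvd_pow ℓ hle) (ZMod (ℓ ^ (nseq (t : ℕ)))))
        ((kseq (N + 1) : ZMod (ℓ ^ M₀))) = (kseq (N + 1) : ZMod (ℓ ^ (nseq (t : ℕ)))) :=
      map_intCast _ _
    have hne := hsep (t : ℕ) (N + 1) (Nat.lt_succ_of_le (Nat.le_of_lt_succ t.2))
    rw [hcast] at horth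
    rw [if_neg hne] at horth
    show r t • P (w (t : ℕ)) = 0
    rw [show P (w (t : ℕ)) = 0 from horth, smul_zero]
  rw [Finset.sum_congr rfl (fun t _ => hterm t)] at happ
  rw [Finset.sum_const_zero] at happ
  -- but the right side is nonzero
  have hself : P (w (N + 1)) = pfun u M₀ ((kseq (N + 1) : ZMod (ℓ ^ M₀))) c := by
    have hle : nseq (N + 1) ≤ M₀ := hM₀ge _ (le_refl _)
    have horth := pfun_pfun u hu hucomp hle ((kseq (N + 1) : ZMod (ℓ ^ (nseq (N + 1)))))
      ((kseq (N + 1) : ZMod (ℓ ^ M₀))) c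
    have hcast : (ZMod.castHom (pow_dvd_pow ℓ hle) (ZMod (ℓ ^ (nseq (N + 1)))))
        ((kseq (N + 1) : ZMod (ℓ ^ M₀))) = (kseq (N + 1) : ZMod (ℓ ^ (nseq (N + 1)))) :=
      map_intCast _ _
    rw [hcast, if_pos rfl] at horth
    exact horth
  rw [hself] at happ
  exact hknonzero (N + 1) M₀ (hM₀ge _ (le_refl _)) happ.symm

end Finiteness

section Helpers

variable {R : Type*} [CommRing R] {A : Type*} [CommRing A] [Algebra R A]

theorem mapDomain_apply_eq_sum {α β M : Type*} [AddCommMonoid M] [DecidableEq β]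
    (f : α → β) (x : α →₀ M) (b : β) :
    Finsupp.mapDomain f x b = ∑ a ∈ x.support, if f a = b then x a else 0 := by
  rw [Finsupp.mapDomain, Finsupp.sum_apply]
  rw [Finsupp.sum]
  apply Finset.sum_congr rfl
  intro a _
  rw [Finsupp.single_apply]

variable {C : Type*} [CommRing C] [HopfAlgebra R C]
  {ℓ : ℕ} {u : ∀ n : ℕ, C →ₐ[R] AddMonoidAlgebra R (ZMod (ℓ ^ n))}

theorem laurentHopfHomSet_coeff {g : C →ₐ[R] LaurentPolynomial A}
    (hg : g ∈ laurentHopfHomSet ℓ u A) (c : C) (n : ℕ) (j : ZMod (ℓ ^ n)) :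
    (∑ k ∈ (g c).coeff.support, if ((k : ZMod (ℓ ^ n)) = j) then (g c).coeff k else 0) =
      algebraMap R A ((u n c).coeff j) := by
  classical
  have h1 := DFunLike.congr_fun (hg.2 n) c
  have h2 : laurentToCyclic A (ℓ ^ n) (g c) =
      groupAlgMapCoeff (ZMod (ℓ ^ n)) (Algebra.ofId R A) (u n c) := by
    simpa using h1
  have h3 := congrArg (fun z => z.coeff j) h2
  rw [laurentToCyclic_eq_mapDomain, mapDomain_apply_eq_sum] at h3
  rw [h3, groupAlgMapCoeff_apply]
  rfl

theorem laurentHopfHomSet_coeff_eq {g : C →ₐ[R] LaurentPolynomial A}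
    (hg : g ∈ laurentHopfHomSet ℓ u A) (c : C) (n : ℕ) (k : ℤ)
    (hsep : ∀ k' ∈ (g c).coeff.support, ((k' : ZMod (ℓ ^ n)) = (k : ZMod (ℓ ^ n))) → k' = k) :
    algebraMap R A ((u n c).coeff (k : ZMod (ℓ ^ n))) = (g c).coeff k := by
  classical
  rw [← laurentHopfHomSet_coeff hg c n (k : ZMod (ℓ ^ n))]
  have h4 : ∀ a ∈ (g c).coeff.support,
      (if ((a : ZMod (ℓ ^ n)) = (k : ZMod (ℓ ^ n))) then (g c).coeff a else 0) =
        (if a = k then (g c).coeff a else 0) := by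
    intro a ha
    by_cases hak : a = k
    · subst hak; simp
    · rw [if_neg hak, if_neg (fun hc => hak (hsep a ha hc))]
  rw [Finset.sum_congr rfl h4]
  rw [Finset.sum_ite_eq' (g c).coeff.support k (fun a => (g c).coeff a)]
  by_cases hk : k ∈ (g c).coeff.support
  · rw [if_pos hk]
  · rw [if_neg hk]
    exact (Finsupp.notMem_support_iff.mp hk).symm

theorem finset_sep (hl2 : 2 ≤ ℓ) (s : Finset ℤ) :
    ∃ m₀ : ℕ, ∀ m, m₀ ≤ m → ∀ x ∈ s, ∀ y ∈ s, x ≠ y →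
      (x : ZMod (ℓ ^ m)) ≠ (y : ZMod (ℓ ^ m)) := by
  classical
  have F : ∀ p : ℤ × ℤ, ∃ m₂ : ℕ, p.1 ≠ p.2 →
      ((p.1 : ZMod (ℓ ^ m₂)) ≠ (p.2 : ZMod (ℓ ^ m₂))) := by
    intro p
    by_cases hp : p.1 = p.2
    · exact ⟨0, fun hc => absurd hp hc⟩
    · obtain ⟨m₂, hm₂⟩ := exists_sep (ℓ := ℓ) hl2 hp
      exact ⟨m₂, fun _ => hm₂⟩
  choose Ffun Fspec using F
  refine ⟨(s ×ˢ s).sup Ffun, fun m hm x hx y hy hxy => ?_⟩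
  have hle : Ffun (x, y) ≤ m :=
    le_trans (Finset.le_sup (Finset.mk_mem_product hx hy)) hm
  exact int_cast_ne_of_le (ℓ := ℓ) hle (Fspec (x, y) hxy)

end Helpers


/-- Lemma 2.2.7 (descent along an injection into a product): let `ℓ` be a prime invertible in
`R`, `R` finitely generated over `ℤ`, `C` a finitely presented commutative Hopf `R`-algebra,
and `u_n : C → R[z]/(z^{ℓⁿ} - 1)` a compatible family of Hopf algebra homomorphisms.  Let `A`
be a commutative `R`-algebra and `(B i)` a family of commutative `A`-algebras such that
`A → ∏ i, B i` is injective.  Then the natural map `F(A) → ∏ i, F(B i)`, given componentwise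
by base change along `A → B i`, is bijective. -/
theorem hopfHomSet_bijOn_of_injective_into_product
    {R : Type*} [CommRing R] {C : Type*} [CommRing C] [HopfAlgebra R C]
    {ℓ : ℕ} (hℓ : Nat.Prime ℓ) (hℓR : IsUnit (ℓ : R))
    (hR : Algebra.FiniteType ℤ R) (hC : Algebra.FinitePresentation R C)
    (u : ∀ n : ℕ, C →ₐ[R] AddMonoidAlgebra R (ZMod (ℓ ^ n)))
    (hu : ∀ n, IsHopfAlgHomToGroupAlg (u n))
    (hucomp : ∀ n, (cyclicProj R (pow_dvd_pow ℓ (Nat.le_succ n))).comp (u (n + 1)) = u n)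
    (A : Type*) [CommRing A] [Algebra R A]
    {ι : Type*} (B : ι → Type*) [∀ i, CommRing (B i)] [∀ i, Algebra R (B i)]
    [∀ i, Algebra A (B i)] [∀ i, IsScalarTower R A (B i)]
    (hinj : Function.Injective (Pi.ringHom fun i => algebraMap A (B i))) :
    Set.BijOn
      (fun (g : C →ₐ[R] LaurentPolynomial A) (i : ι) =>
        (groupAlgMapCoeff ℤ (IsScalarTower.toAlgHom R A (B i))).comp g)
      (laurentHopfHomSet ℓ u A)
      (Set.univ.pi fun i => laurentHopfHomSet ℓ u (B i)) := by
  classical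
  haveI : Algebra.FiniteType ℤ R := hR
  haveI : IsNoetherianRing R := Algebra.FiniteType.isNoetherianRing ℤ R
  have hl2 : 2 ≤ ℓ := hℓ.two_le
  set φ : ∀ i, A →ₐ[R] B i := fun i => IsScalarTower.toAlgHom R A (B i) with hφ
  have hφalg : ∀ (i) (r : R), φ i (algebraMap R A r) = algebraMap R (B i) r := by
    intro i r
    show algebraMap A (B i) (algebraMap R A r) = algebraMap R (B i) r
    rw [← IsScalarTower.algebraMap_apply]
  have hinj' : ∀ a b : A, (∀ i, φ i a = φ i b) → a = b := by
    intro a b hab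
    apply hinj
    funext i
    exact hab i
  have hJ : ∀ x y : LaurentPolynomial A,
      (∀ i, groupAlgMapCoeff ℤ (φ i) x = groupAlgMapCoeff ℤ (φ i) y) → x = y := by
    intro x y hxy
    apply AddMonoidAlgebra.coeff_injective; apply Finsupp.ext; intro k
    apply hinj'
    intro i
    have h1 := congrArg (fun z => z.coeff k) (hxy i)
    rwa [groupAlgMapCoeff_apply, groupAlgMapCoeff_apply] at h1
  -- forward transfer (MapsTo)
  have hmaps : ∀ g ∈ laurentHopfHomSet ℓ u A, ∀ i,
      (groupAlgMapCoeff ℤ (φ i)).comp g ∈ laurentHopfHomSet ℓ u (B i) := by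
    intro g hg i
    refine ⟨⟨?_, ?_⟩, ?_⟩
    · apply AlgHom.ext; intro c
      show groupAlgComul (B i) ℤ (groupAlgMapCoeff ℤ (φ i) (g c)) =
        tensorSquare ((groupAlgMapCoeff ℤ (φ i)).comp g) (Bialgebra.comulAlgHom R C c)
      apply (tcoord (B i) ℤ).injective
      rw [tcoord_comul_mapCoeff, tcoord_tensorSquare]
      congr 1
      have h1 := DFunLike.congr_fun hg.1.1 c
      simpa using h1
    · apply AlgHom.ext; intro c
      show groupAlgCounit (B i) ℤ (groupAlgMapCoeff ℤ (φ i) (g c)) =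
        Algebra.ofId R (B i) (Bialgebra.counitAlgHom R C c)
      rw [groupAlgCounit_mapCoeff]
      have h1 := DFunLike.congr_fun hg.1.2 c
      have h2 : groupAlgCounit A ℤ (g c) = algebraMap R A (Bialgebra.counitAlgHom R C c) := by
        simpa using h1
      rw [h2]
      rw [Algebra.ofId_apply]
      exact hφalg i _
    · intro n
      apply AlgHom.ext; intro c
      show laurentToCyclic (B i) (ℓ ^ n) (groupAlgMapCoeff ℤ (φ i) (g c)) =
        groupAlgMapCoeff (ZMod (ℓ ^ n)) (Algebra.ofId R (B i)) (u n c)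
      rw [laurentToCyclic_mapCoeff]
      have h2 : laurentToCyclic A (ℓ ^ n) (g c) =
          groupAlgMapCoeff (ZMod (ℓ ^ n)) (Algebra.ofId R A) (u n c) := by
        simpa using DFunLike.congr_fun (hg.2 n) c
      rw [h2]
      apply AddMonoidAlgebra.coeff_injective; apply Finsupp.ext; intro j
      rw [groupAlgMapCoeff_apply, groupAlgMapCoeff_apply, groupAlgMapCoeff_apply]
      show φ i (algebraMap R A ((u n c).coeff j)) = algebraMap R (B i) ((u n c).coeff j)
      exact hφalg i _
  constructor
  · -- MapsTo
    intro g hg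
    intro i _
    exact hmaps g hg i
  constructor
  · -- InjOn
    intro g _ g' _ hgg'
    apply AlgHom.ext; intro c
    apply hJ; intro i
    have h1 := congrFun hgg' i
    exact DFunLike.congr_fun h1 c
  · -- SurjOn
    intro h hmem
    have hhi : ∀ i, h i ∈ laurentHopfHomSet ℓ u (B i) := fun i => hmem i (Set.mem_univ i)
    -- Step 1 : pointwise descent of coefficients
    have hγ : ∀ c : C, ∃ γc : LaurentPolynomial A,
        ∀ i, groupAlgMapCoeff ℤ (φ i) γc = h i c := by
      intro c
      have hKfin : {k : ℤ | ∃ i, (h i c).coeff k ≠ 0}.Finite := by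
        apply Set.Finite.subset (persistent_finite u hl2 hu hucomp c)
        rintro k ⟨i, hki⟩
        obtain ⟨m₁, hm₁⟩ := finset_sep (ℓ := ℓ) hl2 (insert k (h i c).coeff.support)
        refine ⟨m₁, fun m hm hz => ?_⟩
        have hsepm : ∀ k' ∈ (h i c).coeff.support,
            ((k' : ZMod (ℓ ^ m)) = (k : ZMod (ℓ ^ m))) → k' = k := by
          intro k' hk' hcast
          by_contra hne
          exact hm₁ m hm k' (Finset.mem_insert_of_mem hk') k (Finset.mem_insert_self _ _)
            hne hcast
        have hco := laurentHopfHomSet_coeff_eq (hhi i) c m k hsepm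
        have hu0 : (u m c).coeff ((k : ZMod (ℓ ^ m))) ≠ 0 := by
          intro h0
          rw [h0, map_zero] at hco
          exact hki hco.symm
        apply hu0
        have h3 := counit_pfun u m ((k : ZMod (ℓ ^ m))) c
        rw [hz, map_zero, efun_apply] at h3
        exact h3.symm
      set S := hKfin.toFinset with hS
      obtain ⟨m₀, hm₀⟩ := finset_sep (ℓ := ℓ) hl2 S
      refine ⟨∑ k ∈ S, AddMonoidAlgebra.single k (algebraMap R A ((u m₀ c).coeff (k : ZMod (ℓ ^ m₀)))), ?_⟩
      intro i
      apply AddMonoidAlgebra.coeff_injective; apply Finsupp.ext; intro k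
      rw [groupAlgMapCoeff_apply]
      have hcoeff : (∑ k' ∈ S,
          AddMonoidAlgebra.single k' (algebraMap R A ((u m₀ c).coeff (k' : ZMod (ℓ ^ m₀))))).coeff k
          = if k ∈ S then algebraMap R A ((u m₀ c).coeff (k : ZMod (ℓ ^ m₀))) else 0 := by
        rw [AddMonoidAlgebra.coeff_sum, Finset.sum_apply']
        simp only [AddMonoidAlgebra.coeff_single]
        rw [Finset.sum_congr rfl (fun k' _ => Finsupp.single_apply)]
        exact Finset.sum_ite_eq' S k (fun k' => algebraMap R A ((u m₀ c).coeff (k' : ZMod (ℓ ^ m₀))))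
      rw [hcoeff]
      by_cases hk : k ∈ S
      · rw [if_pos hk, hφalg]
        apply laurentHopfHomSet_coeff_eq (hhi i) c m₀ k
        intro k' hk' hcast
        have hk'S : k' ∈ S := by
          rw [hS, Set.Finite.mem_toFinset]
          exact ⟨i, Finsupp.mem_support_iff.mp hk'⟩
        by_contra hne
        exact hm₀ m₀ le_rfl k' hk'S k hk hne hcast
      · rw [if_neg hk, map_zero]
        have hzero : (h i c).coeff k = 0 := by
          by_contra hne
          apply hk
          rw [hS, Set.Finite.mem_toFinset]
          exact ⟨i, hne⟩
        exact hzero.symm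
    choose γ hγspec using hγ
    -- Step 2 : build the algebra homomorphism over A
    obtain ⟨nn, f, hfsurj, -⟩ := hC
    set gP : MvPolynomial (Fin nn) R →ₐ[R] LaurentPolynomial A :=
      MvPolynomial.aeval (fun t => γ (f (MvPolynomial.X t))) with hgP
    have hgPcomp : ∀ i, (groupAlgMapCoeff ℤ (φ i)).comp gP = (h i).comp f := by
      intro i
      apply MvPolynomial.algHom_ext
      intro t
      rw [AlgHom.comp_apply, AlgHom.comp_apply, hgP, MvPolynomial.aeval_X]
      exact hγspec (f (MvPolynomial.X t)) i
    set g₀ : C → LaurentPolynomial A := fun c => gP (Function.surjInv hfsurj c) with hg₀def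
    have hg₀ : ∀ i c, groupAlgMapCoeff ℤ (φ i) (g₀ c) = h i c := by
      intro i c
      have h1 := DFunLike.congr_fun (hgPcomp i) (Function.surjInv hfsurj c)
      rw [AlgHom.comp_apply, AlgHom.comp_apply, Function.surjInv_eq hfsurj c] at h1
      exact h1
    set g : C →ₐ[R] LaurentPolynomial A :=
      { toFun := g₀
        map_one' := hJ _ _ fun i => by rw [hg₀ i 1, map_one, map_one]
        map_mul' := fun x y => hJ _ _ fun i => by
          rw [hg₀ i (x * y), map_mul, map_mul, hg₀ i x, hg₀ i y]
        map_zero' := hJ _ _ fun i => by rw [hg₀ i 0, map_zero, map_zero]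
        map_add' := fun x y => hJ _ _ fun i => by
          rw [hg₀ i (x + y), map_add, map_add, hg₀ i x, hg₀ i y]
        commutes' := fun r => hJ _ _ fun i => by
          rw [hg₀ i (algebraMap R C r), AlgHom.commutes, AlgHom.commutes] } with hgdef
    have hg₀' : ∀ i c, groupAlgMapCoeff ℤ (φ i) (g c) = h i c := fun i c => hg₀ i c
    have hcomp : ∀ i, (groupAlgMapCoeff ℤ (φ i)).comp g = h i :=
      fun i => AlgHom.ext fun c => hg₀' i c
    -- Step 3 : membership of g
    have hgmem : g ∈ laurentHopfHomSet ℓ u A := by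
      refine ⟨⟨?_, ?_⟩, ?_⟩
      · apply AlgHom.ext; intro c
        show groupAlgComul A ℤ (g c) = tensorSquare g (Bialgebra.comulAlgHom R C c)
        apply (tcoord A ℤ).injective
        apply Finsupp.ext; intro p
        apply hinj'; intro i
        have e1 : φ i ((tcoord A ℤ (groupAlgComul A ℤ (g c))) p) =
            (tcoord (B i) ℤ (groupAlgComul (B i) ℤ (groupAlgMapCoeff ℤ (φ i) (g c)))) p := by
          rw [tcoord_comul_mapCoeff, Finsupp.mapRange_apply]
        have e2 : φ i ((tcoord A ℤ (tensorSquare g (Bialgebra.comulAlgHom R C c))) p) =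
            (tcoord (B i) ℤ (tensorSquare ((groupAlgMapCoeff ℤ (φ i)).comp g)
              (Bialgebra.comulAlgHom R C c))) p := by
          rw [tcoord_tensorSquare, Finsupp.mapRange_apply]
        rw [e1, e2]
        have h1 : groupAlgComul (B i) ℤ (groupAlgMapCoeff ℤ (φ i) (g c)) =
            tensorSquare (h i) (Bialgebra.comulAlgHom R C c) := by
          rw [hg₀' i c]
          simpa using DFunLike.congr_fun (hhi i).1.1 c
        rw [h1, ← hcomp i]
      · apply AlgHom.ext; intro c
        show groupAlgCounit A ℤ (g c) = Algebra.ofId R A (Bialgebra.counitAlgHom R C c)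
        apply hinj'; intro i
        have e1 : φ i (groupAlgCounit A ℤ (g c)) =
            groupAlgCounit (B i) ℤ (groupAlgMapCoeff ℤ (φ i) (g c)) :=
          (groupAlgCounit_mapCoeff (φ i) (g c)).symm
        rw [e1, hg₀' i c]
        have h1 : groupAlgCounit (B i) ℤ (h i c) =
            algebraMap R (B i) (Bialgebra.counitAlgHom R C c) := by
          simpa using DFunLike.congr_fun (hhi i).1.2 c
        rw [h1]
        rw [Algebra.ofId_apply, hφalg]
      · intro n
        apply AlgHom.ext; intro c
        show laurentToCyclic A (ℓ ^ n) (g c) =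
          groupAlgMapCoeff (ZMod (ℓ ^ n)) (Algebra.ofId R A) (u n c)
        apply AddMonoidAlgebra.coeff_injective; apply Finsupp.ext; intro j
        apply hinj'; intro i
        have e1 : φ i ((laurentToCyclic A (ℓ ^ n) (g c)).coeff j) =
            (laurentToCyclic (B i) (ℓ ^ n) (groupAlgMapCoeff ℤ (φ i) (g c))).coeff j := by
          rw [laurentToCyclic_mapCoeff, groupAlgMapCoeff_apply]
        rw [e1, hg₀' i c]
        have h1 : laurentToCyclic (B i) (ℓ ^ n) (h i c) =
            groupAlgMapCoeff (ZMod (ℓ ^ n)) (Algebra.ofId R (B i)) (u n c) := by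
          simpa using DFunLike.congr_fun ((hhi i).2 n) c
        rw [h1, groupAlgMapCoeff_apply, groupAlgMapCoeff_apply]
        show algebraMap R (B i) ((u n c).coeff j) = φ i (algebraMap R A ((u n c).coeff j))
        rw [hφalg]
    exact ⟨g, hgmem, funext fun i => hcomp i⟩
end
end
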